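/- arXiv:2505.13689 — 5 statements merged into one kernel-verified Lean document; each statement's English description precedes it below -/
import Mathlib

section
/- Let F be a lift of an orientation-preserving circle homeomorphism that is piecewise linear (affine on finitely many intervals determined by break points). If F^q(x) = x + p for all real x (i.e., every point is periodic of period q for the circle map with rotation number p/q), then the circle map is conjugate to the rigid rotation x ↦ x + p/q (mod 1) via a piecewise linear circle homeomorphism. -/
open MeasureTheory Filter Set

/-- A lift of an orientation-preserving circle homeomorphism. -/
def IsLift (F : ℝ → ℝ) : Prop :=
  Continuous F ∧ StrictMono F ∧ ∀ x, F (x + 1) = F x + 1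

/-- `b` is a break point of `F`: one-sided derivatives exist and differ. -/
def IsBreakPoint (F : ℝ → ℝ) (b : ℝ) : Prop :=
  ∃ dm dp : ℝ, dm ≠ dp ∧ HasDerivWithinAt F dm (Set.Iic b) b ∧
    HasDerivWithinAt F dp (Set.Ici b) b

/-- `F` is a piecewise linear lift with break point set `B ⊆ [0,1)`:
it is a lift, each point of `B` is a break point, and `F` is affine near any
point not congruent (mod 1) to a break point. -/
def IsPWLLift (F : ℝ → ℝ) (B : Finset ℝ) : Prop :=
  IsLift F ∧ (↑B : Set ℝ) ⊆ Set.Ico (0 : ℝ) 1 ∧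
  (∀ b ∈ B, IsBreakPoint F b) ∧
  (∀ x : ℝ, (∀ b ∈ B, ∀ k : ℤ, x ≠ b + k) →
    ∃ ε > 0, ∃ a c : ℝ, ∀ y, |y - x| < ε → F y = a * y + c)

/-- The rotation number of the lift `F` is `ρ`. -/
def HasRotNum (F : ℝ → ℝ) (ρ : ℝ) : Prop :=
  ∀ x : ℝ, Filter.Tendsto (fun m : ℕ => (F^[m] x - x) / m) Filter.atTop (nhds ρ)

/-- `b` and `b'` lie on the same orbit of the circle map induced by the lift `F`. -/
def SameOrbit (F : ℝ → ℝ) (b b' : ℝ) : Prop :=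
  ∃ j : ℕ, ∃ m : ℤ, F^[j] b = b' + m ∨ F^[j] b' = b + m

lemma iter_add_one {F : ℝ → ℝ} (h1 : ∀ x, F (x + 1) = F x + 1) :
    ∀ (n : ℕ) (x : ℝ), F^[n] (x + 1) = F^[n] x + 1 := by
  intro n
  induction n with
  | zero => simp
  | succ n ih =>
    intro x
    rw [Function.iterate_succ_apply, Function.iterate_succ_apply, h1, ih]

lemma int_add {F : ℝ → ℝ} (h1 : ∀ x, F (x + 1) = F x + 1) :
    ∀ (m : ℤ) (x : ℝ), F (x + m) = F x + m := by
  have hm1 : ∀ x, F (x - 1) = F x - 1 := by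
    intro x
    have := h1 (x - 1)
    rw [sub_add_cancel] at this
    linarith
  intro m
  induction m using Int.induction_on with
  | zero => simp
  | succ k ih =>
    intro x
    have ih' := ih x
    push_cast at ih' ⊢
    rw [← add_assoc, h1, ih']; ring
  | pred k ih =>
    intro x
    have ih' := ih x
    push_cast at ih' ⊢
    have h2 : x + (-(k:ℝ) - 1) = (x + -(k:ℝ)) - 1 := by ring
    rw [h2, hm1, ih']
    ring

lemma iter_int_add {F : ℝ → ℝ} (h1 : ∀ x, F (x + 1) = F x + 1) :
    ∀ (n : ℕ) (m : ℤ) (x : ℝ), F^[n] (x + m) = F^[n] x + m := by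
  intro n
  induction n with
  | zero => simp
  | succ n ih =>
    intro m x
    rw [Function.iterate_succ_apply, Function.iterate_succ_apply, int_add h1, ih]

lemma iterAffine {F : ℝ → ℝ} {B : Finset ℝ}
    (haff : ∀ x : ℝ, (∀ b ∈ B, ∀ k : ℤ, x ≠ b + k) →
      ∃ ε > 0, ∃ a c : ℝ, ∀ y, |y - x| < ε → F y = a * y + c) :
    ∀ (n : ℕ) (x : ℝ), (∀ j < n, ∀ b ∈ B, ∀ k : ℤ, F^[j] x ≠ b + k) →
      ∃ ε > 0, ∃ a c : ℝ, ∀ y, |y - x| < ε → F^[n] y = a * y + c := by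
  intro n
  induction n with
  | zero =>
    intro x _
    exact ⟨1, one_pos, 1, 0, fun y _ => by simp⟩
  | succ n ih =>
    intro x hx
    obtain ⟨ε₁, hε₁, a₁, c₁, h₁⟩ := ih x (fun j hj => hx j (Nat.lt_succ_of_lt hj))
    obtain ⟨ε₂, hε₂, a₂, c₂, h₂⟩ := haff (F^[n] x) (hx n n.lt_succ_self)
    refine ⟨min ε₁ (ε₂ / (|a₁| + 1)), ?_, a₂ * a₁, a₂ * c₁ + c₂, ?_⟩
    · have : (0:ℝ) < |a₁| + 1 := by positivity
      exact lt_min hε₁ (div_pos hε₂ this)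
    intro y hy
    have hy₁ : |y - x| < ε₁ := lt_of_lt_of_le hy (min_le_left _ _)
    have hFn : F^[n] y = a₁ * y + c₁ := h₁ y hy₁
    have hxx : F^[n] x = a₁ * x + c₁ := h₁ x (by simpa using hε₁)
    have hnear : |F^[n] y - F^[n] x| < ε₂ := by
      rw [hFn, hxx, show a₁ * y + c₁ - (a₁ * x + c₁) = a₁ * (y - x) by ring, abs_mul]
      have h3 : |y - x| < ε₂ / (|a₁| + 1) := lt_of_lt_of_le hy (min_le_right _ _)
      calc |a₁| * |y - x| ≤ (|a₁| + 1) * |y - x| := by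
            apply mul_le_mul_of_nonneg_right _ (abs_nonneg _); linarith [abs_nonneg a₁]
        _ < (|a₁| + 1) * (ε₂ / (|a₁| + 1)) := by
            apply mul_lt_mul_of_pos_left h3; positivity
        _ = ε₂ := by field_simp
    rw [Function.iterate_succ_apply', h₂ _ hnear, hFn]
    ring

lemma sumAffine {F : ℝ → ℝ} {B : Finset ℝ}
    (haff : ∀ x : ℝ, (∀ b ∈ B, ∀ k : ℤ, x ≠ b + k) →
      ∃ ε > 0, ∃ a c : ℝ, ∀ y, |y - x| < ε → F y = a * y + c) :
    ∀ (n : ℕ) (x : ℝ), (∀ j < n, ∀ b ∈ B, ∀ k : ℤ, F^[j] x ≠ b + k) →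
      ∃ ε > 0, ∃ a c : ℝ, ∀ y, |y - x| < ε →
        ∑ j ∈ Finset.range n, F^[j] y = a * y + c := by
  intro n
  induction n with
  | zero => intro x _; exact ⟨1, one_pos, 0, 0, fun y _ => by simp⟩
  | succ n ih =>
    intro x hx
    obtain ⟨ε₁, hε₁, a₁, c₁, h₁⟩ := ih x (fun j hj => hx j (Nat.lt_succ_of_lt hj))
    obtain ⟨ε₂, hε₂, a₂, c₂, h₂⟩ := iterAffine haff n x (fun j hj => hx j (Nat.lt_succ_of_lt hj))
    have hlast := iterAffine haff n x
    refine ⟨min ε₁ ε₂, lt_min hε₁ hε₂, a₁ + a₂, c₁ + c₂, ?_⟩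
    intro y hy
    rw [Finset.sum_range_succ, h₁ y (lt_of_lt_of_le hy (min_le_left _ _)),
      h₂ y (lt_of_lt_of_le hy (min_le_right _ _))]
    ring

lemma affine_hasDerivAt (a c z : ℝ) : HasDerivAt (fun w => a * w + c) a z := by
  simpa using ((hasDerivAt_id z).const_mul a).add_const c

lemma affine_of_locallyAffine {H : ℝ → ℝ} (hc : Continuous H) {u v : ℝ} (huv : u < v)
    (hloc : ∀ y ∈ Set.Ioo u v, ∃ ε > 0, ∃ a c : ℝ, ∀ z, |z - y| < ε → H z = a * z + c) :
    ∃ a c : ℝ, ∀ y ∈ Set.Icc u v, H y = a * y + c := by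
  -- Step 1: at every point of Ioo u v there is a ball on which deriv H is constant
  have key : ∀ y ∈ Set.Ioo u v, ∃ ε > 0, Metric.ball y ε ⊆ Set.Ioo u v ∧
      ∃ a : ℝ, ∀ z ∈ Metric.ball y ε, HasDerivAt H a z ∧ deriv H z = a := by
    intro y hy
    obtain ⟨ε, hε, a, c, h⟩ := hloc y hy
    refine ⟨min ε (min (y - u) (v - y)), ?_, ?_, a, ?_⟩
    · exact lt_min hε (lt_min (by linarith [hy.1]) (by linarith [hy.2]))
    · intro z hz
      rw [Metric.mem_ball, Real.dist_eq] at hz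
      have h1 := lt_of_lt_of_le hz (min_le_right _ _)
      have h2 := lt_of_lt_of_le h1 (min_le_left _ _)
      have h3 := lt_of_lt_of_le h1 (min_le_right _ _)
      rw [abs_lt] at h2 h3
      constructor <;> [linarith [h2.1]; linarith [h3.2]]
    · intro z hz
      rw [Metric.mem_ball, Real.dist_eq] at hz
      have hzε : |z - y| < ε := lt_of_lt_of_le hz (min_le_left _ _)
      have hev : H =ᶠ[nhds z] (fun w => a * w + c) := by
        have hmem : Metric.ball y ε ∈ nhds z := by
          apply Metric.isOpen_ball.mem_nhds
          rw [Metric.mem_ball, Real.dist_eq]; exact hzε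
        filter_upwards [hmem] with w hw
        rw [Metric.mem_ball, Real.dist_eq] at hw
        exact h w hw
      have hd : HasDerivAt H a z := (affine_hasDerivAt a c z).congr_of_eventuallyEq hev
      exact ⟨hd, hd.deriv⟩
  set y₀ := (u + v) / 2 with hy₀def
  have hy₀ : y₀ ∈ Set.Ioo u v := ⟨by simp [hy₀def]; linarith, by simp [hy₀def]; linarith⟩
  set a₀ := deriv H y₀ with ha₀def
  -- Step 2: deriv H = a₀ on Ioo u v by connectedness
  have hconst : ∀ y ∈ Set.Ioo u v, deriv H y = a₀ := by
    by_contra hcon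
    push_neg at hcon
    obtain ⟨y₁, hy₁, hy₁ne⟩ := hcon
    set U : Set ℝ := {y | ∃ ε > 0, ∀ z ∈ Metric.ball y ε, deriv H z = a₀} with hUdef
    set V : Set ℝ := {y | ∃ ε > 0, Metric.ball y ε ⊆ Set.Ioo u v ∧
      ∀ z ∈ Metric.ball y ε, deriv H z ≠ a₀} with hVdef
    have hUopen : IsOpen U := by
      rw [Metric.isOpen_iff]
      intro y ⟨ε, hε, h⟩
      refine ⟨ε / 2, by linarith, fun y' hy' => ⟨ε / 2, by linarith, fun z hz => ?_⟩⟩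
      apply h
      rw [Metric.mem_ball] at *
      calc dist z y ≤ dist z y' + dist y' y := dist_triangle _ _ _
        _ < ε / 2 + ε / 2 := add_lt_add hz hy'
        _ = ε := by ring
    have hVopen : IsOpen V := by
      rw [Metric.isOpen_iff]
      intro y ⟨ε, hε, hsub, h⟩
      refine ⟨ε / 2, by linarith, fun y' hy' => ⟨ε / 2, by linarith, ?_, fun z hz => ?_⟩⟩
      · intro z hz
        apply hsub
        rw [Metric.mem_ball] at *
        calc dist z y ≤ dist z y' + dist y' y := dist_triangle _ _ _
          _ < ε / 2 + ε / 2 := add_lt_add hz hy'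
          _ = ε := by ring
      · apply h
        rw [Metric.mem_ball] at *
        calc dist z y ≤ dist z y' + dist y' y := dist_triangle _ _ _
          _ < ε / 2 + ε / 2 := add_lt_add hz hy'
          _ = ε := by ring
    have hcover : Set.Ioo u v ⊆ U ∪ V := by
      intro y hy
      obtain ⟨ε, hε, hsub, a, h⟩ := key y hy
      by_cases ha : a = a₀
      · left; exact ⟨ε, hε, fun z hz => (h z hz).2.trans ha⟩
      · right; exact ⟨ε, hε, hsub, fun z hz => (h z hz).2.symm ▸ ha⟩
    have hUmem : ∀ y ∈ U, deriv H y = a₀ := by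
      intro y ⟨ε, hε, h⟩
      exact h y (Metric.mem_ball_self hε)
    have hVmem : ∀ y ∈ V, deriv H y ≠ a₀ := by
      intro y ⟨ε, hε, _, h⟩
      exact h y (Metric.mem_ball_self hε)
    have hneU : (Set.Ioo u v ∩ U).Nonempty := by
      refine ⟨y₀, hy₀, ?_⟩
      obtain ⟨ε, hε, hsub, a, h⟩ := key y₀ hy₀
      have : a = a₀ := (h y₀ (Metric.mem_ball_self hε)).2.symm
      exact ⟨ε, hε, fun z hz => (h z hz).2.trans this⟩
    have hneV : (Set.Ioo u v ∩ V).Nonempty := by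
      refine ⟨y₁, hy₁, ?_⟩
      obtain ⟨ε, hε, hsub, a, h⟩ := key y₁ hy₁
      have ha : a ≠ a₀ := by
        intro hh
        exact hy₁ne ((h y₁ (Metric.mem_ball_self hε)).2.trans hh)
      exact ⟨ε, hε, hsub, fun z hz => (h z hz).2.symm ▸ ha⟩
    obtain ⟨z, hz, hzU, hzV⟩ := isPreconnected_Ioo U V hUopen hVopen hcover hneU hneV
    exact hVmem z hzV (hUmem z hzU)
  -- Step 3: HasDerivAt H a₀ everywhere on Ioo
  have hderiv : ∀ y ∈ Set.Ioo u v, HasDerivAt H a₀ y := by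
    intro y hy
    obtain ⟨ε, hε, hsub, a, h⟩ := key y hy
    have := (h y (Metric.mem_ball_self hε)).1
    rwa [← (h y (Metric.mem_ball_self hε)).2, hconst y hy] at this
  -- Step 4: MVT gives affinity
  have hslope : ∀ y ∈ Set.Ioo u v, ∀ z ∈ Set.Ioo u v, y < z → H z - H y = a₀ * (z - y) := by
    intro y hy z hz hyz
    obtain ⟨w, hw, hweq⟩ := exists_hasDerivAt_eq_slope H (fun _ => a₀) hyz
      (hc.continuousOn)
      (fun w hw => hderiv w ⟨lt_trans hy.1 hw.1, lt_trans hw.2 hz.2⟩)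
    have hne : z - y ≠ 0 := by linarith
    field_simp at hweq
    linarith [hweq]
  refine ⟨a₀, H y₀ - a₀ * y₀, ?_⟩
  have hIoo : ∀ y ∈ Set.Ioo u v, H y = a₀ * y + (H y₀ - a₀ * y₀) := by
    intro y hy
    rcases lt_trichotomy y y₀ with h | h | h
    · have := hslope y hy y₀ hy₀ h; linarith
    · rw [h]; ring
    · have := hslope y₀ hy₀ y hy h; linarith
  have hclosure : Set.EqOn H (fun y => a₀ * y + (H y₀ - a₀ * y₀)) (Set.Icc u v) := by
    rw [← closure_Ioo (ne_of_lt huv)]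
    exact Set.EqOn.closure hIoo hc (by fun_prop)
  exact fun y hy => hclosure hy

lemma bad_finite {F : ℝ → ℝ} (hmono : StrictMono F) (h1 : ∀ x, F (x + 1) = F x + 1)
    {B : Finset ℝ} (hB : (↑B : Set ℝ) ⊆ Set.Ico (0:ℝ) 1) (q : ℕ) (d : ℝ) :
    Set.Finite {x : ℝ | x ∈ Set.Icc (d-1) (d+1) ∧
      ∃ j < q, ∃ b ∈ B, ∃ k : ℤ, F^[j] x = b + k} := by
  have hsub : {x : ℝ | x ∈ Set.Icc (d-1) (d+1) ∧ ∃ j < q, ∃ b ∈ B, ∃ k : ℤ, F^[j] x = b + k}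
      ⊆ ⋃ j ∈ Finset.range q, ⋃ b ∈ B, ⋃ k ∈ Finset.Icc ⌈F^[j] d - 2⌉ ⌊F^[j] d + 1⌋,
        {x : ℝ | F^[j] x = b + k} := by
    rintro x ⟨hx, j, hj, b, hb, k, hk⟩
    have hbIco := hB hb
    have hmonoj := hmono.iterate j
    have hlo : F^[j] (d - 1) ≤ F^[j] x := hmonoj.monotone (by linarith [hx.1])
    have hhi : F^[j] x ≤ F^[j] (d + 1) := hmonoj.monotone (by linarith [hx.2])
    have e1 : F^[j] (d + 1) = F^[j] d + 1 := iter_add_one h1 j d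
    have e2 : F^[j] (d - 1) = F^[j] d - 1 := by
      have := iter_add_one h1 j (d - 1)
      rw [sub_add_cancel] at this
      linarith
    have hklo : F^[j] d - 2 ≤ (k : ℝ) := by
      have : F^[j] d - 1 ≤ b + k := by rw [← hk]; linarith
      linarith [hbIco.2]
    have hkhi : (k : ℝ) ≤ F^[j] d + 1 := by
      have : b + k ≤ F^[j] d + 1 := by rw [← hk]; linarith
      linarith [hbIco.1]
    simp only [Set.mem_iUnion]
    exact ⟨j, Finset.mem_range.2 hj, b, hb, k,
      Finset.mem_Icc.2 ⟨Int.ceil_le.2 hklo, Int.le_floor.2 hkhi⟩, hk⟩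
  apply Set.Finite.subset _ hsub
  apply Set.Finite.biUnion (Finset.range q).finite_toSet
  intro j _
  apply Set.Finite.biUnion B.finite_toSet
  intro b _
  apply Set.Finite.biUnion (Finset.Icc _ _).finite_toSet
  intro k _
  apply Set.Subsingleton.finite
  intro x hx y hy
  exact (hmono.iterate j).injective (hx.trans hy.symm)

lemma punctured_good {F : ℝ → ℝ} (hmono : StrictMono F) (h1 : ∀ x, F (x + 1) = F x + 1)
    {B : Finset ℝ} (hB : (↑B : Set ℝ) ⊆ Set.Ico (0:ℝ) 1) (q : ℕ) (d : ℝ) :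
    ∃ ε > 0, ∀ y : ℝ, 0 < |y - d| → |y - d| < ε →
      ∀ j < q, ∀ b ∈ B, ∀ k : ℤ, F^[j] y ≠ b + k := by
  have hfin := bad_finite hmono h1 hB q d
  have hfin' : (({x : ℝ | x ∈ Set.Icc (d-1) (d+1) ∧
      ∃ j < q, ∃ b ∈ B, ∃ k : ℤ, F^[j] x = b + k}) \ {d}).Finite := hfin.diff
  have hclosed := hfin'.isClosed
  have hd : d ∈ (({x : ℝ | x ∈ Set.Icc (d-1) (d+1) ∧
      ∃ j < q, ∃ b ∈ B, ∃ k : ℤ, F^[j] x = b + k}) \ {d})ᶜ := fun h => h.2 rfl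
  obtain ⟨ε', hε', hball⟩ := Metric.isOpen_iff.1 hclosed.isOpen_compl d hd
  refine ⟨min ε' 1, lt_min hε' one_pos, fun y hy0 hyε j hj b hb k hk => ?_⟩
  have hy1 : |y - d| < 1 := lt_of_lt_of_le hyε (min_le_right _ _)
  have hyIcc : y ∈ Set.Icc (d-1) (d+1) := by
    rw [abs_lt] at hy1; constructor <;> linarith [hy1.1, hy1.2]
  have hyne : y ≠ d := by
    intro h; rw [h] at hy0; simp at hy0
  have hymem : y ∈ ({x : ℝ | x ∈ Set.Icc (d-1) (d+1) ∧
      ∃ j < q, ∃ b ∈ B, ∃ k : ℤ, F^[j] x = b + k}) \ {d} :=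
    ⟨⟨hyIcc, j, hj, b, hb, k, hk⟩, hyne⟩
  have : y ∈ Metric.ball d ε' := by
    rw [Metric.mem_ball, Real.dist_eq]
    exact lt_of_lt_of_le hyε (min_le_left _ _)
  exact hball this hymem

lemma sided {H : ℝ → ℝ} (hc : Continuous H) {d ε : ℝ} (hε : 0 < ε)
    (hloc : ∀ y : ℝ, 0 < |y - d| → |y - d| < ε →
      ∃ δ > 0, ∃ a c : ℝ, ∀ z, |z - y| < δ → H z = a * z + c) :
    (IsBreakPoint H d) ∨ (∃ δ > 0, ∃ a c : ℝ, ∀ y, |y - d| < δ → H y = a * y + c) := by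
  obtain ⟨ap, cp, hpr⟩ := affine_of_locallyAffine hc (show d < d + ε by linarith)
    (fun y hy => hloc y (by rw [abs_of_pos (by linarith [hy.1])]; linarith [hy.1])
      (by rw [abs_of_pos (by linarith [hy.1])]; linarith [hy.2]))
  obtain ⟨am, cm, hml⟩ := affine_of_locallyAffine hc (show d - ε < d by linarith)
    (fun y hy => hloc y (by rw [abs_of_neg (by linarith [hy.2])]; linarith [hy.2])
      (by rw [abs_of_neg (by linarith [hy.2])]; linarith [hy.1]))
  have hdp : HasDerivWithinAt H ap (Set.Ici d) d := by
    have hmem : Set.Icc d (d + ε) ∈ nhdsWithin d (Set.Ici d) :=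
      Icc_mem_nhdsGE_of_mem ⟨le_refl d, by linarith⟩
    refine (affine_hasDerivAt ap cp d).hasDerivWithinAt.congr_of_eventuallyEq ?_ ?_
    · filter_upwards [hmem] with w hw
      exact hpr w hw
    · exact hpr d ⟨le_refl d, by linarith⟩
  have hdm : HasDerivWithinAt H am (Set.Iic d) d := by
    have hmem : Set.Icc (d - ε) d ∈ nhdsWithin d (Set.Iic d) :=
      Icc_mem_nhdsLE_of_mem ⟨by linarith, le_refl d⟩
    refine (affine_hasDerivAt am cm d).hasDerivWithinAt.congr_of_eventuallyEq ?_ ?_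
    · filter_upwards [hmem] with w hw
      exact hml w hw
    · exact hml d ⟨by linarith, le_refl d⟩
  by_cases hne : am = ap
  · right
    have hcc : cm = cp := by
      have e1 := hml d ⟨by linarith, le_refl d⟩
      have e2 := hpr d ⟨le_refl d, by linarith⟩
      rw [e1, hne] at e2
      linarith
    refine ⟨ε, hε, ap, cp, fun y hy => ?_⟩
    rw [abs_lt] at hy
    rcases le_or_gt y d with h | h
    · rw [hml y ⟨by linarith [hy.1], h⟩, hne, hcc]
    · exact hpr y ⟨le_of_lt h, by linarith [hy.2]⟩
  · exact Or.inl ⟨am, ap, hne, hdm, hdp⟩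

/-- A PWL lift with `F^q(x) = x + p` for all `x` is conjugate to the
rigid rotation by `p/q` via a piecewise linear circle homeomorphism. -/
theorem stmt0 (F : ℝ → ℝ) (B : Finset ℝ) (p : ℤ) (q : ℕ) (hq : 0 < q)
    (hF : IsPWLLift F B) (hper : ∀ x, F^[q] x = x + p) :
    ∃ (H : ℝ → ℝ) (B' : Finset ℝ), IsPWLLift H B' ∧
      ∀ x, H (F x) = H x + (p : ℝ) / q := by
  obtain ⟨⟨hcont, hmono, h1⟩, hBsub, hBbrk, haff⟩ := hF
  have hq0 : (0:ℝ) < q := Nat.cast_pos.2 hq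
  have hqne : (q:ℝ) ≠ 0 := ne_of_gt hq0
  set H : ℝ → ℝ := fun x => (∑ j ∈ Finset.range q, F^[j] x) / q with hHdef
  -- lift properties of H
  have hHcont : Continuous H :=
    (continuous_finset_sum _ (fun j _ => hcont.iterate j)).div_const q
  have hHmono : StrictMono H := by
    intro x y hxy
    have hsum : ∑ j ∈ Finset.range q, F^[j] x < ∑ j ∈ Finset.range q, F^[j] y :=
      Finset.sum_lt_sum_of_nonempty (Finset.nonempty_range_iff.2 hq.ne')
        (fun j _ => hmono.iterate j hxy)
    show _ / (q:ℝ) < _ / (q:ℝ)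
    gcongr
  have hH1 : ∀ x, H (x + 1) = H x + 1 := by
    intro x
    have : ∑ j ∈ Finset.range q, F^[j] (x + 1)
        = (∑ j ∈ Finset.range q, F^[j] x) + q := by
      rw [show (q:ℝ) = ∑ _j ∈ Finset.range q, (1:ℝ) by
        rw [Finset.sum_const, Finset.card_range]; simp]
      rw [← Finset.sum_add_distrib]
      exact Finset.sum_congr rfl (fun j _ => iter_add_one h1 j x)
    simp only [hHdef, this]
    field_simp
  have hHint : ∀ (m : ℤ) (x : ℝ), H (x + m) = H x + m := int_add hH1
  -- conjugacy
  have hconj : ∀ x, H (F x) = H x + (p : ℝ) / q := by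
    intro x
    have e1 : ∑ j ∈ Finset.range q, F^[j] (F x)
        = (∑ j ∈ Finset.range q, F^[j] x) + p := by
      have e2 : ∑ j ∈ Finset.range q, F^[j] (F x)
          = ∑ j ∈ Finset.range q, F^[j+1] x :=
        Finset.sum_congr rfl (fun j _ => (Function.iterate_succ_apply F j x).symm)
      have e3 := Finset.sum_range_succ' (fun j => F^[j] x) q
      have e4 := Finset.sum_range_succ (fun j => F^[j] x) q
      rw [e2]
      have e5 : F^[q] x = x + p := hper x
      simp only [Function.iterate_zero, id] at e3 e4
      rw [e4, e5] at e3
      linarith [e3]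
    simp only [hHdef, e1]
    field_simp
  -- local affinity of H at good points
  have Hlocaff : ∀ y : ℝ, (∀ j < q, ∀ b ∈ B, ∀ k : ℤ, F^[j] y ≠ b + k) →
      ∃ δ > 0, ∃ a c : ℝ, ∀ z, |z - y| < δ → H z = a * z + c := by
    intro y hy
    obtain ⟨δ, hδ, a, c, hsum⟩ := sumAffine haff q y hy
    refine ⟨δ, hδ, a / q, c / q, fun z hz => ?_⟩
    simp only [hHdef, hsum z hz]
    ring
  -- the break point set
  set Bset : Set ℝ := {x : ℝ | x ∈ Set.Ico (0:ℝ) 1 ∧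
    (∃ j < q, ∃ b ∈ B, ∃ k : ℤ, F^[j] x = b + k) ∧ IsBreakPoint H x} with hBsetdef
  have hBsetfin : Bset.Finite := by
    apply (bad_finite hmono h1 hBsub q 0).subset
    rintro x ⟨hx1, hx2, _⟩
    exact ⟨⟨by linarith [hx1.1], by linarith [hx1.2]⟩, hx2⟩
  refine ⟨H, hBsetfin.toFinset, ⟨⟨hHcont, hHmono, hH1⟩, ?_, ?_, ?_⟩, hconj⟩
  · intro x hx
    rw [Finset.mem_coe, Set.Finite.mem_toFinset] at hx
    exact hx.1
  · intro b hb
    rw [Set.Finite.mem_toFinset] at hb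
    exact hb.2.2
  · -- affinity away from B'
    intro x hx
    by_cases hgood : ∀ j < q, ∀ b ∈ B, ∀ k : ℤ, F^[j] x ≠ b + k
    · exact Hlocaff x hgood
    · push_neg at hgood
      obtain ⟨j, hj, b, hb, k, hk⟩ := hgood
      set d : ℝ := x - ⌊x⌋ with hddef
      have hdx : x = d + ⌊x⌋ := by rw [hddef]; ring
      have hdIco : d ∈ Set.Ico (0:ℝ) 1 := by
        constructor
        · rw [hddef]; linarith [Int.floor_le x]
        · rw [hddef]; linarith [Int.lt_floor_add_one x]
      have hdbad : ∃ j < q, ∃ b ∈ B, ∃ k' : ℤ, F^[j] d = b + k' := by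
        refine ⟨j, hj, b, hb, k - ⌊x⌋, ?_⟩
        have := iter_int_add h1 j (-⌊x⌋) x
        push_cast at this ⊢
        rw [show d = x + -(⌊x⌋:ℝ) by rw [hddef]; ring, this, hk]
        ring
      have hdnotin : d ∉ Bset := by
        intro hmem
        exact hx d (Set.Finite.mem_toFinset _ |>.2 hmem) ⌊x⌋ hdx
      have hdnotbrk : ¬ IsBreakPoint H d := fun hbrk => hdnotin ⟨hdIco, hdbad, hbrk⟩
      obtain ⟨ε, hε, hpunct⟩ := punctured_good hmono h1 hBsub q d
      have hsided := sided hHcont hε (fun y hy0 hyε => Hlocaff y (hpunct y hy0 hyε))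
      rcases hsided with hbrk | ⟨δ, hδ, a, c, haffd⟩
      · exact absurd hbrk hdnotbrk
      · refine ⟨δ, hδ, a, c + ⌊x⌋ - a * ⌊x⌋, fun y hy => ?_⟩
        have h5 : H y = H (y - ⌊x⌋) + ⌊x⌋ := by
          have := hHint ⌊x⌋ (y - ⌊x⌋)
          rw [sub_add_cancel] at this
          rw [this]
        have h6 : |y - (⌊x⌋:ℝ) - d| < δ := by
          rw [show y - (⌊x⌋:ℝ) - d = y - x by linarith [hdx]]
          exact hy
        rw [h5, haffd _ h6]
        ring
end

section
/- Let f be a piecewise linear orientation-preserving circle homeomorphism with rational rotation number p/q (in lowest terms). If every break point of f is periodic (necessarily of period q), then f^q is the identity on the circle. -/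
open MeasureTheory Filter Set

/-! ### Auxiliary lemmas -/

lemma affine_two_point {a c a' c' w₁ w₂ : ℝ} (hne : w₁ ≠ w₂)
    (h1 : a * w₁ + c = a' * w₁ + c') (h2 : a * w₂ + c = a' * w₂ + c') :
    a = a' ∧ c = c' := by
  have h3 : (a - a') * (w₁ - w₂) = 0 := by linear_combination h1 - h2
  rcases mul_eq_zero.mp h3 with h4 | h4
  · have ha : a = a' := by linarith
    subst ha
    exact ⟨rfl, by linarith⟩
  · exact absurd (by linarith : w₁ = w₂) hne

lemma affine_on_Icc (h : ℝ → ℝ) {u v : ℝ} (huv : u ≤ v)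
    (H : ∀ z ∈ Set.Icc u v, ∃ ε > 0, ∃ a c : ℝ, ∀ y, |y - z| < ε → h y = a * y + c) :
    ∃ a c : ℝ, ∀ z ∈ Set.Icc u v, h z = a * z + c := by
  obtain ⟨ε₀, hε₀, a, c, ha⟩ := H u ⟨le_rfl, huv⟩
  refine ⟨a, c, ?_⟩
  set P : Set ℝ := {z | z ∈ Set.Icc u v ∧ ∀ w ∈ Set.Icc u z, h w = a * w + c} with hPdef
  have huP : u ∈ P := by
    refine ⟨⟨le_rfl, huv⟩, fun w hw => ?_⟩
    have hwu : w = u := le_antisymm hw.2 hw.1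
    subst hwu
    exact ha w (by simpa using hε₀)
  have hPne : P.Nonempty := ⟨u, huP⟩
  have hPbdd : BddAbove P := ⟨v, fun z hz => hz.1.2⟩
  set m := sSup P with hm
  have hum : u ≤ m := le_csSup hPbdd huP
  have hmv : m ≤ v := csSup_le hPne (fun z hz => hz.1.2)
  have hIco : ∀ w, u ≤ w → w < m → h w = a * w + c := by
    intro w hw hwm
    obtain ⟨z, hzP, hwz⟩ := exists_lt_of_lt_csSup hPne hwm
    exact hzP.2 w ⟨hw, le_of_lt hwz⟩
  have hext : ∀ ε₁ > (0:ℝ), (∀ y, |y - m| < ε₁ → h y = a * y + c) → m < v → False := by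
    intro ε₁ hε₁ hy hmv'
    set z := min v (m + ε₁ / 2) with hz
    have hmz : m < z := lt_min hmv' (by linarith)
    have hzP : z ∈ P := by
      refine ⟨⟨le_trans hum (le_of_lt hmz), min_le_left _ _⟩, fun w hw => ?_⟩
      rcases lt_or_ge w m with h1 | h1
      · exact hIco w hw.1 h1
      · refine hy w ?_
        have h2 : w ≤ m + ε₁ / 2 := le_trans hw.2 (min_le_right _ _)
        rw [abs_sub_lt_iff]
        constructor <;> linarith
    exact absurd (le_csSup hPbdd hzP) (not_le.mpr hmz)
  have hdata : ∃ ε₁ > (0:ℝ), ∀ y, |y - m| < ε₁ → h y = a * y + c := by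
    rcases eq_or_lt_of_le hum with hmu | hmu
    · exact ⟨ε₀, hε₀, fun y hy => ha y (by rwa [hmu])⟩
    · obtain ⟨ε₁, hε₁, a₁, c₁, h₁⟩ := H m ⟨hum, hmv⟩
      obtain ⟨δ, hδdef⟩ : ∃ δ, δ = min ε₁ (m - u) := ⟨_, rfl⟩
      have hδ : 0 < δ := hδdef ▸ lt_min hε₁ (by linarith)
      have hδ1 : δ ≤ ε₁ := hδdef ▸ min_le_left _ _
      have hδ2 : δ ≤ m - u := hδdef ▸ min_le_right _ _
      obtain ⟨w₁, hw1⟩ : ∃ w, w = m - δ / 2 := ⟨_, rfl⟩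
      obtain ⟨w₂, hw2⟩ : ∃ w, w = m - δ / 4 := ⟨_, rfl⟩
      have e1 : h w₁ = a * w₁ + c := hIco w₁ (by linarith) (by linarith)
      have e2 : h w₂ = a * w₂ + c := hIco w₂ (by linarith) (by linarith)
      have e1' : h w₁ = a₁ * w₁ + c₁ := h₁ w₁ (by rw [abs_sub_lt_iff]; constructor <;> linarith)
      have e2' : h w₂ = a₁ * w₂ + c₁ := h₁ w₂ (by rw [abs_sub_lt_iff]; constructor <;> linarith)
      obtain ⟨haa, hcc⟩ := affine_two_point (show w₁ ≠ w₂ by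
        rw [hw1, hw2]; intro hcontra; linarith) (e1 ▸ e1') (e2 ▸ e2')
      exact ⟨ε₁, hε₁, fun y hy => by rw [h₁ y hy, ← haa, ← hcc]⟩
  obtain ⟨ε₁, hε₁, h₁⟩ := hdata
  have hmeq : h m = a * m + c := h₁ m (by simpa using hε₁)
  have hmv' : m = v := by
    by_contra hne
    exact hext ε₁ hε₁ h₁ (lt_of_le_of_ne hmv hne)
  intro z hz
  rcases eq_or_lt_of_le hz.2 with rfl | hzv
  · rw [← hmv'] at *; exact hmeq
  · exact hIco z hz.1 (by rw [hmv']; exact hzv)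

section AuxF
variable {F : ℝ → ℝ}

lemma lift_int (h1 : ∀ x, F (x + 1) = F x + 1) : ∀ (x : ℝ) (n : ℤ), F (x + n) = F x + n := by
  have hm1 : ∀ x, F (x - 1) = F x - 1 := by
    intro x
    have := h1 (x - 1)
    simp at this
    linarith
  intro x n
  induction n using Int.induction_on with
  | zero => simp
  | succ k ih =>
      have := h1 (x + k)
      push_cast
      push_cast at ih
      rw [← add_assoc, this, ih]; ring
  | pred k ih =>
      have := hm1 (x - k)
      push_cast
      push_cast at ih
      have e : x + (-(k:ℝ) - 1) = (x - k) - 1 := by ring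
      rw [e, this, show x - (k:ℝ) = x + -(k:ℝ) by ring, ih]; ring

lemma lift_int_iter (h1 : ∀ x, F (x + 1) = F x + 1) :
    ∀ (k : ℕ) (x : ℝ) (n : ℤ), F^[k] (x + n) = F^[k] x + n := by
  intro k
  induction k with
  | zero => simp
  | succ k ih =>
      intro x n
      rw [Function.iterate_succ_apply', Function.iterate_succ_apply', ih, lift_int h1]

lemma rot_const {p : ℤ} {q : ℕ} (hq : 0 < q)
    (hrot : ∀ x : ℝ, Filter.Tendsto (fun m : ℕ => (F^[m] x - x) / m) Filter.atTop (nhds ((p : ℝ) / q)))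
    {c : ℝ} (hc : ∀ y, F^[q] y = y + c) : c = p := by
  have key : ∀ m : ℕ, F^[q * m] 0 = m * c := by
    intro m
    induction m with
    | zero => simp
    | succ m ih =>
        have : q * (m + 1) = q + q * m := by ring
        rw [this, Function.iterate_add_apply, ih, hc]
        push_cast; ring
  have hmul : Tendsto (fun m : ℕ => q * m) atTop atTop :=
    tendsto_atTop_atTop_of_monotone (fun a b h => Nat.mul_le_mul_left q h)
      (fun n => ⟨n, Nat.le_mul_of_pos_left n hq⟩)
  have t1 : Tendsto (fun m : ℕ => (F^[q * m] 0 - 0) / (q * m : ℕ)) atTop (nhds ((p : ℝ) / q)) :=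
    (hrot 0).comp hmul
  have t2 : Tendsto (fun m : ℕ => (F^[q * m] 0 - 0) / (q * m : ℕ)) atTop (nhds (c / q)) := by
    apply Tendsto.congr' _ tendsto_const_nhds
    filter_upwards [eventually_ge_atTop 1] with m hm
    rw [key]
    have hm0 : (m : ℝ) ≠ 0 := Nat.cast_ne_zero.mpr (by omega)
    have hq0 : (q : ℝ) ≠ 0 := Nat.cast_ne_zero.mpr (by omega)
    push_cast
    field_simp
    ring
  have := tendsto_nhds_unique t2 t1
  have hq0 : (q : ℝ) ≠ 0 := Nat.cast_ne_zero.mpr (by omega)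
  field_simp at this
  exact this

lemma iter_affine (k : ℕ) (x : ℝ)
    (Hk : ∀ j < k, ∃ ε > (0:ℝ), ∃ a c : ℝ, ∀ y, |y - F^[j] x| < ε → F y = a * y + c) :
    ∃ ε > (0:ℝ), ∃ a c : ℝ, ∀ y, |y - x| < ε → F^[k] y = a * y + c := by
  induction k with
  | zero => exact ⟨1, one_pos, 1, 0, fun y _ => by simp⟩
  | succ k ih =>
      obtain ⟨ε, hε, a, c, hac⟩ := ih (fun j hj => Hk j (Nat.lt_succ_of_lt hj))
      obtain ⟨ε', hε', a', c', hac'⟩ := Hk k (Nat.lt_succ_self k)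
      refine ⟨min ε (ε' / (|a| + 1)), lt_min hε (by positivity), a' * a, a' * c + c', fun y hy => ?_⟩
      have hy1 : |y - x| < ε := lt_of_lt_of_le hy (min_le_left _ _)
      have hy2 : |y - x| < ε' / (|a| + 1) := lt_of_lt_of_le hy (min_le_right _ _)
      have hkx : F^[k] x = a * x + c := hac x (by simpa using hε)
      have hky : F^[k] y = a * y + c := hac y hy1
      have hclose : |F^[k] y - F^[k] x| < ε' := by
        rw [hky, hkx]
        have : a * y + c - (a * x + c) = a * (y - x) := by ring
        rw [this, abs_mul]
        calc |a| * |y - x| ≤ |a| * (ε' / (|a| + 1)) := by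
              apply mul_le_mul_of_nonneg_left (le_of_lt hy2) (abs_nonneg a)
          _ < ε' := by
              have h1 : |a| / (|a| + 1) < 1 := by
                rw [div_lt_one (by positivity)]; linarith [abs_nonneg a]
              calc |a| * (ε' / (|a| + 1)) = (|a| / (|a| + 1)) * ε' := by ring
                _ < 1 * ε' := by apply mul_lt_mul_of_pos_right h1 hε'
                _ = ε' := one_mul ε'
      rw [Function.iterate_succ_apply', hac' _ hclose, hky]
      ring

end AuxF

/-- if every break point of a PWL circle homeomorphism with rotation
number `p/q` (in lowest terms) is periodic, then `f^q` is the identity on the circle,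
i.e. `F^q(x) = x + p` for all `x`. -/
theorem stmt1 (F : ℝ → ℝ) (B : Finset ℝ) (p : ℤ) (q : ℕ) (hq : 0 < q)
    (hcop : Nat.Coprime p.natAbs q)
    (hF : IsPWLLift F B) (hrot : HasRotNum F ((p : ℝ) / q))
    (hper : ∀ b ∈ B, F^[q] b = b + p) :
    ∀ x, F^[q] x = x + p := by
  obtain ⟨⟨hcont, hmono, h1⟩, hBIco, hbrk, haff⟩ := hF
  have hZk := lift_int_iter h1
  have hhcont : Continuous F^[q] := hcont.iterate q
  set S : Set ℝ := {x | ∃ b ∈ B, ∃ j < q, ∃ m : ℤ, x = F^[j] b + m} with hSdef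
  set T : Set ℝ := {x | F^[q] x = x + p} with hTdef
  have hTclosed : IsClosed T :=
    isClosed_eq hhcont (by continuity)
  -- each orbit point of a break point is a fixed point of F^[q] - p
  have hST : S ⊆ T := by
    rintro x ⟨b, hb, j, hj, m, rfl⟩
    show F^[q] (F^[j] b + (m:ℝ)) = F^[j] b + (m:ℝ) + p
    rw [hZk q _ m]
    have key : F^[q] (F^[j] b) = F^[j] b + p := by
      calc F^[q] (F^[j] b) = F^[q + j] b := (Function.iterate_add_apply F q j b).symm
        _ = F^[j + q] b := by rw [Nat.add_comm]
        _ = F^[j] (F^[q] b) := Function.iterate_add_apply F j q b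
        _ = F^[j] (b + p) := by rw [hper b hb]
        _ = F^[j] b + p := hZk j b p
    rw [key]; ring
  have hTtrans : ∀ t ∈ T, ∀ n : ℤ, t + (n:ℝ) ∈ T := by
    intro t ht n
    show F^[q] (t + (n:ℝ)) = t + (n:ℝ) + p
    rw [hZk q t n, ht]; ring
  -- F^[q] is locally affine off S
  have hoff : ∀ z : ℝ, z ∉ S →
      ∃ ε > (0:ℝ), ∃ a c : ℝ, ∀ y, |y - z| < ε → F^[q] y = a * y + c := by
    intro z hz
    apply iter_affine q z
    intro j hj
    apply haff
    intro b hb m hbm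
    apply hz
    rcases Nat.eq_zero_or_pos j with rfl | hj1
    · exact ⟨b, hb, 0, hq, m, by simpa using hbm⟩
    · refine ⟨b, hb, q - j, by omega, m - p, ?_⟩
      have inj : Function.Injective F^[j] := (hmono.iterate j).injective
      apply inj
      rw [hbm, hZk j _ (m - p), ← Function.iterate_add_apply,
        (show j + (q - j) = q by omega), hper b hb]
      push_cast; ring
  intro x
  by_contra hx
  have hxT : x ∉ T := hx
  by_cases hTne : T.Nonempty
  · -- T nonempty: take the nearest fixed points around x
    obtain ⟨t, ht⟩ := hTne
    have hLne : (T ∩ Iic x).Nonempty := by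
      refine ⟨t + (⌊x - t⌋ : ℤ), hTtrans t ht _, ?_⟩
      have := Int.floor_le (x - t)
      simp only [mem_Iic]; linarith
    have hLbdd : BddAbove (T ∩ Iic x) := ⟨x, fun z hz => hz.2⟩
    set u := sSup (T ∩ Iic x) with hu
    have huT : u ∈ T ∩ Iic x := (hTclosed.inter isClosed_Iic).csSup_mem hLne hLbdd
    have hux : u < x := lt_of_le_of_ne huT.2 (fun e => hxT (e ▸ huT.1))
    have hRne : (T ∩ Ici x).Nonempty := by
      refine ⟨t + (⌈x - t⌉ : ℤ), hTtrans t ht _, ?_⟩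
      have := Int.le_ceil (x - t)
      simp only [mem_Ici]; linarith
    have hRbdd : BddBelow (T ∩ Ici x) := ⟨x, fun z hz => hz.2⟩
    set v := sInf (T ∩ Ici x) with hv
    have hvT : v ∈ T ∩ Ici x := (hTclosed.inter isClosed_Ici).csInf_mem hRne hRbdd
    have hxv : x < v := lt_of_le_of_ne hvT.2 (fun e => hxT (e.symm ▸ hvT.1))
    have huv : u < v := lt_trans hux hxv
    have hIooT : ∀ z ∈ Ioo u v, z ∉ T := by
      intro z hz hzT
      rcases le_or_gt z x with hzx | hzx
      · exact absurd (le_csSup hLbdd ⟨hzT, hzx⟩) (not_le.mpr hz.1)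
      · exact absurd (csInf_le hRbdd ⟨hzT, le_of_lt hzx⟩) (not_le.mpr hz.2)
    obtain ⟨x₁, hx1⟩ : ∃ w, w = u + (v - u) / 3 := ⟨_, rfl⟩
    obtain ⟨x₂, hx2⟩ : ∃ w, w = v - (v - u) / 3 := ⟨_, rfl⟩
    have hux1 : u < x₁ := by rw [hx1]; linarith
    have h12 : x₁ < x₂ := by rw [hx1, hx2]; linarith
    have hx2v : x₂ < v := by rw [hx2]; linarith
    obtain ⟨A, hA⟩ : ∃ w, w = (F^[q] x₂ - F^[q] x₁) / (x₂ - x₁) := ⟨_, rfl⟩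
    obtain ⟨C, hC⟩ : ∃ w, w = F^[q] x₁ - A * x₁ := ⟨_, rfl⟩
    have hlin : ∀ z ∈ Ioo u v, F^[q] z = A * z + C := by
      intro z hz
      have hl : u < min z x₁ := lt_min hz.1 hux1
      have hr : max z x₂ < v := max_lt hz.2 hx2v
      have hlr : min z x₁ ≤ max z x₂ :=
        le_trans (min_le_right _ _) (le_trans (le_of_lt h12) (le_max_right _ _))
      obtain ⟨a, c, hac⟩ := affine_on_Icc F^[q] hlr (fun w hw => hoff w (fun hwS =>
        hIooT w ⟨lt_of_lt_of_le hl hw.1, lt_of_le_of_lt hw.2 hr⟩ (hST hwS)))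
      have e1 : F^[q] x₁ = a * x₁ + c :=
        hac x₁ ⟨min_le_right _ _, le_trans (le_of_lt h12) (le_max_right _ _)⟩
      have e2 : F^[q] x₂ = a * x₂ + c :=
        hac x₂ ⟨le_trans (min_le_right _ _) (le_of_lt h12), le_max_right _ _⟩
      have ez : F^[q] z = a * z + c := hac z ⟨min_le_left _ _, le_max_left _ _⟩
      have hne : x₂ - x₁ ≠ 0 := sub_ne_zero.mpr (ne_of_gt h12)
      rw [ez, hC, hA, e1, e2]
      field_simp
      ring
    have hEq : Set.EqOn F^[q] (fun y => A * y + C) (Icc u v) := by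
      have heo : Set.EqOn F^[q] (fun y => A * y + C) (Ioo u v) := fun z hz => hlin z hz
      have := heo.closure hhcont (by fun_prop)
      rwa [closure_Ioo (ne_of_lt huv)] at this
    have eu : F^[q] u = A * u + C := hEq ⟨le_rfl, le_of_lt huv⟩
    have ev : F^[q] v = A * v + C := hEq ⟨le_of_lt huv, le_rfl⟩
    have eu' : F^[q] u = u + p := huT.1
    have ev' : F^[q] v = v + p := hvT.1
    obtain ⟨hA1, hC1⟩ : A = 1 ∧ C = (p:ℝ) := by
      refine affine_two_point (ne_of_lt huv) ?_ ?_
      · rw [← eu, eu']; ring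
      · rw [← ev, ev']; ring
    apply hxT
    show F^[q] x = x + p
    rw [hEq ⟨le_of_lt hux, le_of_lt hxv⟩, hA1, hC1]; ring
  · -- T empty: no break points are relevant, F^[q] is globally affine
    have hSe : ∀ z : ℝ, z ∉ S := fun z hz => hTne ⟨z, hST hz⟩
    have hlin : ∀ z : ℝ, F^[q] z = (F^[q] 1 - F^[q] 0) * z + F^[q] 0 := by
      intro z
      have hlr : min z 0 ≤ max z 1 :=
        le_trans (min_le_right _ _) (le_trans zero_le_one (le_max_right _ _))
      obtain ⟨a, c, hac⟩ := affine_on_Icc F^[q] hlr (fun w _ => hoff w (hSe w))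
      have e0 : F^[q] (0:ℝ) = a * 0 + c :=
        hac 0 ⟨min_le_right _ _, le_trans zero_le_one (le_max_right _ _)⟩
      have e1 : F^[q] (1:ℝ) = a * 1 + c :=
        hac 1 ⟨le_trans (min_le_right _ _) zero_le_one, le_max_right _ _⟩
      have ez : F^[q] z = a * z + c := hac z ⟨min_le_left _ _, le_max_left _ _⟩
      rw [ez, e0, e1]; ring
    have hper2 : F^[q] (2:ℝ) = F^[q] 1 + 1 := by
      have := hZk q 1 (1:ℤ)
      norm_num at this
      convert this using 2
    have hA1 : F^[q] 1 - F^[q] 0 = 1 := by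
      have l2 := hlin 2
      have l1 := hlin 1
      rw [hper2, l1] at l2
      linarith
    have hc : ∀ y, F^[q] y = y + F^[q] 0 := by
      intro y
      rw [hlin y, hA1]; ring
    have hcp : F^[q] (0:ℝ) = p := rot_const hq hrot hc
    exact hx (by rw [hc x, hcp])
end

section
/- Let f be a piecewise linear orientation-preserving circle homeomorphism with rotation number p/q that is topologically conjugate to the rigid rotation by p/q. Then the orbit under f of every break point contains at least one other break point. In particular, if f has n break points, the number of distinct periodic orbits containing break points is at most n/2. -/
open MeasureTheory Filter Set

section Aux

variable {F H : ℝ → ℝ}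

lemma lift_add_int (hF : IsLift F) (m : ℤ) (x : ℝ) : F (x + m) = F x + m := by
  obtain ⟨-, -, h1⟩ := hF
  induction m using Int.induction_on with
  | zero => simp
  | succ n ih =>
      have h := h1 (x + n)
      push_cast
      push_cast at ih
      rw [show x + ((n : ℝ) + 1) = (x + n) + 1 by ring, h, ih]; ring
  | pred n ih =>
      have h := h1 (x + (-(n : ℝ) - 1))
      push_cast
      push_cast at ih
      rw [show x + (-(n : ℝ) - 1) + 1 = x + -(n:ℝ) by ring] at h
      rw [show x + (-(n:ℝ) - 1) = x + (-(n:ℝ)-1) by ring]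
      linarith [ih, h]

lemma iterate_add_int (hF : IsLift F) (k : ℕ) (m : ℤ) (x : ℝ) :
    F^[k] (x + m) = F^[k] x + m := by
  induction k generalizing x with
  | zero => simp
  | succ k ih =>
      rw [Function.iterate_succ_apply, Function.iterate_succ_apply,
        lift_add_int hF m x, ih]

lemma conj_iterate {ρ : ℝ} (hc : ∀ x, H (F x) = H x + ρ) (k : ℕ) (x : ℝ) :
    H (F^[k] x) = H x + k * ρ := by
  induction k with
  | zero => simp
  | succ k ih =>
      rw [Function.iterate_succ_apply', hc, ih]; push_cast; ring

lemma iterate_q_eq {p : ℤ} {q : ℕ} (hq : 0 < q) (hH : IsLift H)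
    (hc : ∀ x, H (F x) = H x + (p : ℝ) / q) (x : ℝ) : F^[q] x = x + p := by
  have h1 : H (F^[q] x) = H x + q * ((p : ℝ) / q) := conj_iterate hc q x
  have h2 : (q : ℝ) * ((p : ℝ) / q) = p := by
    field_simp
  have h3 : H (x + p) = H x + p := lift_add_int hH p x
  exact hH.2.1.injective (by rw [h1, h2, ← h3])

lemma left_deriv_nonneg (hm : StrictMono F) {d b : ℝ}
    (h : HasDerivWithinAt F d (Iic b) b) : 0 ≤ d := by
  rw [hasDerivWithinAt_iff_tendsto_slope, Iic_diff_right] at h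
  refine ge_of_tendsto h ?_
  filter_upwards [self_mem_nhdsWithin] with y (hy : y < b)
  have h1 : F y ≤ F b := (hm.le_iff_le).2 hy.le
  have h2 : y - b < 0 := by linarith
  rw [slope_def_field, div_nonneg_iff]
  right
  constructor <;> [skip; linarith]
  simpa using sub_nonpos.2 h1

lemma right_deriv_nonneg (hm : StrictMono F) {d b : ℝ}
    (h : HasDerivWithinAt F d (Ici b) b) : 0 ≤ d := by
  rw [hasDerivWithinAt_iff_tendsto_slope, Ici_sdiff_left] at h
  refine ge_of_tendsto h ?_
  filter_upwards [self_mem_nhdsWithin] with y (hy : b < y)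
  have h1 : F b ≤ F y := (hm.le_iff_le).2 hy.le
  rw [slope_def_field]
  apply div_nonneg (by linarith) (by linarith)

lemma translate_deriv (hF : IsLift F) {d b : ℝ} (m : ℤ) {s : Set ℝ}
    (h : HasDerivWithinAt F d s b) :
    HasDerivWithinAt F d ((· + (m : ℝ)) '' s) (b + m) := by
  have key : ∀ y : ℝ, F y = F (y - m) + m := fun y => by
    have := lift_add_int hF m (y - m)
    rw [sub_add_cancel] at this
    linarith
  have h1 : HasDerivWithinAt (fun y : ℝ => y - (m : ℝ)) 1
      ((· + (m : ℝ)) '' s) (b + m) := (hasDerivWithinAt_id _ _).sub_const _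
  have h2 : HasDerivWithinAt (F ∘ fun y : ℝ => y - (m : ℝ)) (d * 1)
      ((· + (m : ℝ)) '' s) (b + m) := by
    refine HasDerivWithinAt.comp (s' := s) (b + (m:ℝ)) ?_ h1 ?_
    · simpa using h
    · rintro y ⟨z, hz, rfl⟩; simpa using hz
  have h3 := h2.add_const (m : ℝ)
  have h4 := h3.congr (fun y _ => key y) (key _)
  simpa using h4

lemma translate_Iic (hF : IsLift F) {d b : ℝ} (m : ℤ)
    (h : HasDerivWithinAt F d (Iic b) b) :
    HasDerivWithinAt F d (Iic (b + m)) (b + m) := by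
  have := translate_deriv hF m h
  rwa [show ((· + (m : ℝ)) '' Iic b) = Iic (b + m) by
    ext y; constructor
    · rintro ⟨z, hz, rfl⟩; simpa using by linarith [mem_Iic.1 hz]
    · intro hy; exact ⟨y - m, by simpa using by linarith [mem_Iic.1 hy], by ring⟩] at this

lemma translate_Ici (hF : IsLift F) {d b : ℝ} (m : ℤ)
    (h : HasDerivWithinAt F d (Ici b) b) :
    HasDerivWithinAt F d (Ici (b + m)) (b + m) := by
  have := translate_deriv hF m h
  rwa [show ((· + (m : ℝ)) '' Ici b) = Ici (b + m) by
    ext y; constructor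
    · rintro ⟨z, hz, rfl⟩; simpa using by linarith [mem_Ici.1 hz]
    · intro hy; exact ⟨y - m, by simpa using by linarith [mem_Ici.1 hy], by ring⟩] at this

lemma affine_hasDerivAt_s2 {a c ε x : ℝ} (hε : 0 < ε)
    (h : ∀ y, |y - x| < ε → F y = a * y + c) : HasDerivAt F a x := by
  have h0 : HasDerivAt (fun y : ℝ => a * y + c) a x := by
    simpa using ((hasDerivAt_id x).const_mul a).add_const c
  refine h0.congr_of_eventuallyEq ?_
  filter_upwards [Metric.ball_mem_nhds x hε] with y hy
  exact h y (by simpa [Real.dist_eq] using hy)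

end Aux

section Main

variable {F : ℝ → ℝ} {B : Finset ℝ}

lemma key_induction (hF : IsPWLLift F B) {b : ℝ} (hb : b ∈ B)
    (hmate : ∀ b' ∈ B, SameOrbit F b b' → b' = b)
    {dm dp : ℝ} (hdm : HasDerivWithinAt F dm (Iic b) b)
    (hdp : HasDerivWithinAt F dp (Ici b) b) (j : ℕ) :
    ∃ k : ℕ, ∃ c : ℝ, (1 ≤ j → 1 ≤ k) ∧
      HasDerivWithinAt (F^[j]) (dm ^ k * c) (Iic b) b ∧
      HasDerivWithinAt (F^[j]) (dp ^ k * c) (Ici b) b := by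
  obtain ⟨hlift, hB01, hbreak, haff⟩ := hF
  induction j with
  | zero =>
      exact ⟨0, 1, by omega,
        by simpa using hasDerivWithinAt_id b (Iic b),
        by simpa using hasDerivWithinAt_id b (Ici b)⟩
  | succ j ih =>
      obtain ⟨k, c, hk, hL, hR⟩ := ih
      set x := F^[j] b with hx
      have mono := hlift.2.1
      have mapsL : MapsTo (F^[j]) (Iic b) (Iic x) := fun y hy =>
        ((mono.iterate j).le_iff_le).2 hy
      have mapsR : MapsTo (F^[j]) (Ici b) (Ici x) := fun y hy =>
        ((mono.iterate j).le_iff_le).2 hy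
      by_cases hcase : ∃ b' ∈ B, ∃ m : ℤ, x = b' + m
      · obtain ⟨b', hb', m, hbm⟩ := hcase
        have hbb : b' = b := hmate b' hb' ⟨j, m, Or.inl hbm⟩
        subst hbb
        rw [hbm] at mapsL mapsR
        have hLx : HasDerivWithinAt F dm (Iic (b' + m)) (b' + m) :=
          translate_Iic hlift m hdm
        have hRx : HasDerivWithinAt F dp (Ici (b' + m)) (b' + m) :=
          translate_Ici hlift m hdp
        refine ⟨k + 1, c, fun _ => by omega, ?_, ?_⟩
        · have h2 : HasDerivWithinAt (F ∘ F^[j]) (dm * (dm ^ k * c)) (Iic b') b' := by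
            refine HasDerivWithinAt.comp (s' := Iic (b' + (m:ℝ))) b' ?_ hL mapsL
            rw [← hx, hbm]; exact hLx
          rw [Function.iterate_succ']
          convert h2 using 1; ring
        · have h2 : HasDerivWithinAt (F ∘ F^[j]) (dp * (dp ^ k * c)) (Ici b') b' := by
            refine HasDerivWithinAt.comp (s' := Ici (b' + (m:ℝ))) b' ?_ hR mapsR
            rw [← hx, hbm]; exact hRx
          rw [Function.iterate_succ']
          convert h2 using 1; ring
      · push_neg at hcase
        have hj : 1 ≤ j := by
          by_contra hj0
          exact hcase b hb 0 (by simp [hx, show j = 0 by omega])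
        obtain ⟨ε, hε, a, c', haffx⟩ := haff x hcase
        have hda : HasDerivAt F a x := affine_hasDerivAt_s2 hε haffx
        refine ⟨k, a * c, fun _ => hk hj, ?_, ?_⟩
        · have h2 : HasDerivWithinAt (F ∘ F^[j]) (a * (dm ^ k * c)) (Iic b) b :=
            HasDerivWithinAt.comp (s' := Iic x) b (hda.hasDerivWithinAt) hL mapsL
          rw [Function.iterate_succ']
          convert h2 using 1; ring
        · have h2 : HasDerivWithinAt (F ∘ F^[j]) (a * (dp ^ k * c)) (Ici b) b :=
            HasDerivWithinAt.comp (s' := Ici x) b (hda.hasDerivWithinAt) hR mapsR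
          rw [Function.iterate_succ']
          convert h2 using 1; ring

lemma part1 (hF : IsPWLLift F B) {p : ℤ} {q : ℕ} (hq : 0 < q)
    (hFq : ∀ x, F^[q] x = x + p) {b : ℝ} (hb : b ∈ B) :
    ∃ b' ∈ B, b' ≠ b ∧ SameOrbit F b b' := by
  by_contra hcon
  push_neg at hcon
  have hmate : ∀ b' ∈ B, SameOrbit F b b' → b' = b := fun b' hb' hso => by
    by_contra hne; exact hcon b' hb' hne hso
  obtain ⟨dm, dp, hne, hdm, hdp⟩ := hF.2.2.1 b hb
  obtain ⟨k, c, hk1, hL, hR⟩ := key_induction hF hb hmate hdm hdp q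
  have hk : 1 ≤ k := hk1 hq
  have hq1 : HasDerivWithinAt (F^[q]) 1 (Iic b) b := by
    have hfun : F^[q] = fun x => x + (p : ℝ) := funext hFq
    rw [hfun]
    simpa using (hasDerivWithinAt_id b (Iic b)).add_const (p : ℝ)
  have hq2 : HasDerivWithinAt (F^[q]) 1 (Ici b) b := by
    have hfun : F^[q] = fun x => x + (p : ℝ) := funext hFq
    rw [hfun]
    simpa using (hasDerivWithinAt_id b (Ici b)).add_const (p : ℝ)
  have uL : UniqueDiffWithinAt ℝ (Iic b) b := uniqueDiffOn_Iic b b (by simp)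
  have uR : UniqueDiffWithinAt ℝ (Ici b) b := uniqueDiffOn_Ici b b (by simp)
  have e1 : dm ^ k * c = 1 := by rw [← hL.derivWithin uL, hq1.derivWithin uL]
  have e2 : dp ^ k * c = 1 := by rw [← hR.derivWithin uR, hq2.derivWithin uR]
  have hc0 : c ≠ 0 := by
    intro h0; rw [h0, mul_zero] at e1; exact one_ne_zero e1.symm
  have hpow : dm ^ k = dp ^ k := mul_right_cancel₀ hc0 (e1.trans e2.symm)
  have h1 : 0 ≤ dm := left_deriv_nonneg hF.1.2.1 hdm
  have h2 : 0 ≤ dp := right_deriv_nonneg hF.1.2.1 hdp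
  exact hne ((pow_left_strictMonoOn₀ (by omega : k ≠ 0)).injOn h1 h2 hpow)

lemma so_refl (b : ℝ) : SameOrbit F b b := ⟨0, 0, Or.inl (by simp)⟩

lemma so_symm {b b' : ℝ} (h : SameOrbit F b b') : SameOrbit F b' b := by
  obtain ⟨j, m, h | h⟩ := h
  exacts [⟨j, m, Or.inr h⟩, ⟨j, m, Or.inl h⟩]

lemma iterate_mul_q {p : ℤ} {q : ℕ} (hFq : ∀ x, F^[q] x = x + p) (N : ℕ) :
    ∀ x : ℝ, F^[N * q] x = x + N * p := by
  induction N with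
  | zero => simp
  | succ N ih =>
      intro x
      rw [show (N + 1) * q = N * q + q by ring, Function.iterate_add_apply,
        ih (F^[q] x), hFq]
      push_cast; ring

lemma so_canonical (hlift : IsLift F) {p : ℤ} {q : ℕ} (hq : 0 < q)
    (hFq : ∀ x, F^[q] x = x + p) {b b' : ℝ} (h : SameOrbit F b b') :
    ∃ j : ℕ, ∃ m : ℤ, F^[j] b = b' + m := by
  obtain ⟨j, m, h | h⟩ := h
  · exact ⟨j, m, h⟩
  · obtain ⟨q', rfl⟩ := Nat.exists_eq_succ_of_ne_zero hq.ne'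
    refine ⟨j * q', (j : ℤ) * p - m, ?_⟩
    have h1 : F^[j * q'] b = F^[j * q'] (F^[j] b' - m) := by rw [h]; ring_nf
    have h2 : F^[j * q'] (F^[j] b' + (-m : ℤ)) = F^[j * q'] (F^[j] b') + (-m : ℤ) :=
      iterate_add_int hlift _ (-m) _
    have h3 : F^[j * q'] (F^[j] b') = F^[j * q' + j] b' :=
      (Function.iterate_add_apply F _ j b').symm
    have h4 : j * q' + j = j * (q' + 1) := by ring
    have h5 : F^[j * (q' + 1)] b' = b' + (j : ℕ) * p := iterate_mul_q hFq j b'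
    rw [show F^[j] b' - (m : ℝ) = F^[j] b' + ((-m : ℤ) : ℝ) by push_cast; ring] at h1
    rw [h1, h2, h3, h4, h5]
    push_cast; ring

lemma so_trans (hlift : IsLift F) {p : ℤ} {q : ℕ} (hq : 0 < q)
    (hFq : ∀ x, F^[q] x = x + p) {b b1 b2 : ℝ}
    (h1 : SameOrbit F b b1) (h2 : SameOrbit F b1 b2) : SameOrbit F b b2 := by
  obtain ⟨j1, m1, e1⟩ := so_canonical hlift hq hFq h1
  obtain ⟨j2, m2, e2⟩ := so_canonical hlift hq hFq h2
  refine ⟨j2 + j1, m2 + m1, Or.inl ?_⟩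
  rw [Function.iterate_add_apply, e1,
    show b1 + (m1 : ℝ) = b1 + ((m1 : ℤ) : ℝ) by norm_num,
    iterate_add_int hlift j2 m1 b1, e2]
  push_cast; ring

end Main

/-- if a PWL circle homeomorphism is conjugate to the rigid rotation by
`p/q`, then the orbit of every break point contains another break point; moreover the
break points are partitioned into orbit classes, each of cardinality at least two, so
the number of distinct orbits of break points is at most `n/2`. -/
theorem stmt2 (F : ℝ → ℝ) (B : Finset ℝ) (p : ℤ) (q : ℕ) (hq : 0 < q)
    (hF : IsPWLLift F B)
    (hconj : ∃ H : ℝ → ℝ, IsLift H ∧ ∀ x, H (F x) = H x + (p : ℝ) / q) :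
    (∀ b ∈ B, ∃ b' ∈ B, b' ≠ b ∧ SameOrbit F b b') ∧
    ∃ P : Finset (Finset ℝ),
      (∀ s ∈ P, s ⊆ B ∧ 2 ≤ s.card ∧ ∀ b ∈ s, ∀ b' ∈ s, SameOrbit F b b') ∧
      (∀ b ∈ B, ∃ s ∈ P, b ∈ s) ∧
      (∀ s ∈ P, ∀ t ∈ P, s ≠ t → Disjoint s t) ∧
      2 * P.card ≤ B.card := by
  classical
  obtain ⟨H, hH, hcH⟩ := hconj
  have hlift := hF.1
  have hFq : ∀ x, F^[q] x = x + p := iterate_q_eq hq hH hcH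
  have h1 : ∀ b ∈ B, ∃ b' ∈ B, b' ≠ b ∧ SameOrbit F b b' := fun b hb =>
    part1 hF hq hFq hb
  refine ⟨h1, ?_⟩
  set cls : ℝ → Finset ℝ := fun b => B.filter (fun b' => SameOrbit F b b') with hcls
  set P : Finset (Finset ℝ) := B.image cls with hP
  have hclsmem : ∀ b ∈ B, b ∈ cls b := fun b hb =>
    Finset.mem_filter.2 ⟨hb, so_refl b⟩
  have hclseq : ∀ b1 b2 : ℝ, SameOrbit F b1 b2 → cls b1 = cls b2 := by
    intro b1 b2 h12
    ext y
    simp only [hcls, Finset.mem_filter, and_congr_right_iff]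
    intro _
    exact ⟨fun h => so_trans hlift hq hFq (so_symm h12) h,
      fun h => so_trans hlift hq hFq h12 h⟩
  have hprop : ∀ s ∈ P, s ⊆ B ∧ 2 ≤ s.card ∧ ∀ b ∈ s, ∀ b' ∈ s, SameOrbit F b b' := by
    intro s hs
    obtain ⟨b, hb, rfl⟩ := Finset.mem_image.1 hs
    refine ⟨Finset.filter_subset _ _, ?_, ?_⟩
    · obtain ⟨b', hb', hne, hso⟩ := h1 b hb
      have hb'm : b' ∈ cls b := Finset.mem_filter.2 ⟨hb', hso⟩
      exact Finset.one_lt_card.2 ⟨b, hclsmem b hb, b', hb'm, hne.symm⟩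
    · intro x hx y hy
      exact so_trans hlift hq hFq (so_symm (Finset.mem_filter.1 hx).2)
        (Finset.mem_filter.1 hy).2
  have hcover : ∀ b ∈ B, ∃ s ∈ P, b ∈ s := fun b hb =>
    ⟨cls b, Finset.mem_image_of_mem _ hb, hclsmem b hb⟩
  have hdisj : ∀ s ∈ P, ∀ t ∈ P, s ≠ t → Disjoint s t := by
    intro s hs t ht hne
    obtain ⟨b1, hb1, rfl⟩ := Finset.mem_image.1 hs
    obtain ⟨b2, hb2, rfl⟩ := Finset.mem_image.1 ht
    rw [Finset.disjoint_left]
    intro x hx1 hx2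
    exact hne (hclseq b1 b2 (so_trans hlift hq hFq (Finset.mem_filter.1 hx1).2
      (so_symm (Finset.mem_filter.1 hx2).2)))
  refine ⟨P, hprop, hcover, hdisj, ?_⟩
  have hsub : P.biUnion id ⊆ B := Finset.biUnion_subset.2 fun s hs => (hprop s hs).1
  calc 2 * P.card = ∑ _s ∈ P, 2 := by rw [Finset.sum_const, smul_eq_mul, mul_comm]
    _ ≤ ∑ s ∈ P, s.card := Finset.sum_le_sum fun s hs => (hprop s hs).2.1
    _ = (P.biUnion id).card := (Finset.card_biUnion fun s hs t ht h => hdisj s hs t ht h).symm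
    _ ≤ B.card := Finset.card_le_card hsub
end

section
/- Suppose a piecewise linear orientation-preserving circle homeomorphism f has exactly one break point lying on some orbit (that orbit contains no other break point) and f^q equals a rigid rotation (F^q(x) = x + p for a lift F). Then the one-sided derivatives at that break point must be equal, a contradiction; hence no such f exists. Equivalently: a PWL circle homeomorphism conjugate to a rigid rational rotation cannot have a break point whose full orbit contains no other break point. -/
open MeasureTheory Filter Set

section StmtFourAux

lemma lift_int_s4 {F : ℝ → ℝ} (h : ∀ x, F (x + 1) = F x + 1) (k : ℤ) (x : ℝ) :
    F (x + k) = F x + k := by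
  induction k using Int.induction_on with
  | zero => simp
  | succ n ih =>
      have h1 := h (x + (n : ℤ))
      push_cast at ih h1 ⊢
      rw [show x + ((n : ℝ) + 1) = x + n + 1 by ring, h1, ih]; ring
  | pred n ih =>
      have h1 := h (x + (-(n : ℤ) - 1))
      push_cast at ih h1 ⊢
      rw [show x + (-(n : ℝ) - 1) + 1 = x + -(n : ℝ) by ring] at h1
      linarith [h1, ih]

lemma deriv_nonneg_left {F : ℝ → ℝ} (hm : StrictMono F) {b d : ℝ}
    (h : HasDerivWithinAt F d (Iic b) b) : 0 ≤ d := by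
  rw [hasDerivWithinAt_iff_tendsto_slope] at h
  have hs : Iic b \ {b} = Iio b := by
    ext y; simp [lt_iff_le_and_ne]
  rw [hs] at h
  refine ge_of_tendsto h ?_
  filter_upwards [self_mem_nhdsWithin] with y (hy : y < b)
  have h1 : F y < F b := hm hy
  rw [slope_comm, slope_def_field]
  exact div_nonneg (by linarith) (by linarith)

lemma deriv_nonneg_right {F : ℝ → ℝ} (hm : StrictMono F) {b d : ℝ}
    (h : HasDerivWithinAt F d (Ici b) b) : 0 ≤ d := by
  rw [hasDerivWithinAt_iff_tendsto_slope] at h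
  have hs : Ici b \ {b} = Ioi b := by
    ext y; simp [lt_iff_le_and_ne]
  rw [hs] at h
  refine ge_of_tendsto h ?_
  filter_upwards [self_mem_nhdsWithin] with y (hy : b < y)
  have h1 : F b < F y := hm hy
  rw [slope_def_field]
  exact div_nonneg (by linarith) (by linarith)

lemma hdw_translate {F : ℝ → ℝ} (h1 : ∀ x, F (x + 1) = F x + 1) {b d : ℝ} (s : Set ℝ)
    (h : HasDerivWithinAt F d s b) (k : ℤ) :
    HasDerivWithinAt F d ((fun y => y + (k:ℝ)) '' s) (b + k) := by
  have key : ∀ y : ℝ, F y = F (y - k) + k := fun y => by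
    have := lift_int_s4 h1 k (y - k)
    rw [sub_add_cancel] at this; rw [this]
  have hg : HasDerivWithinAt (fun y : ℝ => y - (k : ℝ)) 1 ((fun y => y + (k:ℝ)) '' s) (b + k) :=
    ((hasDerivAt_id _).sub_const _).hasDerivWithinAt
  have hmaps : MapsTo (fun y : ℝ => y - (k : ℝ)) ((fun y => y + (k:ℝ)) '' s) s := by
    rintro _ ⟨y, hy, rfl⟩; simpa using hy
  have hpt : HasDerivWithinAt F d s (b + (k : ℝ) - k) := by
    rw [add_sub_cancel_right]; exact h
  have hcomp := hpt.comp (b + (k : ℝ)) hg hmaps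
  have h2 := hcomp.add_const (k : ℝ)
  have h3 := h2.congr (fun y _ => key y) (key _)
  simpa using h3

theorem stmt4' (F : ℝ → ℝ) (B : Finset ℝ) (p : ℤ) (q : ℕ) (hq : 0 < q)
    (hF : (Continuous F ∧ StrictMono F ∧ ∀ x, F (x + 1) = F x + 1) ∧ (↑B : Set ℝ) ⊆ Set.Ico (0 : ℝ) 1 ∧
      (∀ b ∈ B, ∃ dm dp : ℝ, dm ≠ dp ∧ HasDerivWithinAt F dm (Set.Iic b) b ∧
        HasDerivWithinAt F dp (Set.Ici b) b) ∧
      (∀ x : ℝ, (∀ b ∈ B, ∀ k : ℤ, x ≠ b + k) →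
        ∃ ε > 0, ∃ a c : ℝ, ∀ y, |y - x| < ε → F y = a * y + c))
    (hper : ∀ x, F^[q] x = x + p)
    (b : ℝ) (hb : b ∈ B)
    (hlone : ∀ b' ∈ B, (∃ j : ℕ, ∃ m : ℤ, F^[j] b = b' + m ∨ F^[j] b' = b + m) → b' = b) :
    False := by
  obtain ⟨dm, dp, hne, hdm, hdp⟩ := hF.2.2.1 b hb
  have hmono : StrictMono F := hF.1.2.1
  have hlift : ∀ x, F (x + 1) = F x + 1 := hF.1.2.2
  have key : ∀ j : ℕ, ∃ s : ℕ, ∃ c : ℝ, 0 < c ∧ (1 ≤ j → 1 ≤ s) ∧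
      HasDerivWithinAt (F^[j]) (c * dm ^ s) (Iic b) b ∧
      HasDerivWithinAt (F^[j]) (c * dp ^ s) (Ici b) b := by
    intro j
    induction j with
    | zero =>
        refine ⟨0, 1, one_pos, by omega, ?_, ?_⟩ <;>
        · simp only [Function.iterate_zero, pow_zero, mul_one]
          exact hasDerivWithinAt_id _ _
    | succ j ih =>
        obtain ⟨s, c, hc, hs1, hL, hR⟩ := ih
        have hmapsL : MapsTo (F^[j]) (Iic b) (Iic (F^[j] b)) :=
          fun y hy => (hmono.iterate j).monotone hy
        have hmapsR : MapsTo (F^[j]) (Ici b) (Ici (F^[j] b)) :=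
          fun y hy => (hmono.iterate j).monotone hy
        by_cases hx : ∀ b' ∈ B, ∀ k : ℤ, F^[j] b ≠ b' + k
        · obtain ⟨ε, hε, a, cc, haff⟩ := hF.2.2.2 _ hx
          have hFa : HasDerivAt F a (F^[j] b) := by
            have h0 : HasDerivAt (fun y : ℝ => a * y + cc) a (F^[j] b) := by
              simpa using ((hasDerivAt_id (F^[j] b)).const_mul a).add_const cc
            refine HasDerivAt.congr_of_eventuallyEq h0 ?_
            filter_upwards [Metric.ball_mem_nhds (F^[j] b) hε] with y hy
            exact haff y (by simpa [Real.dist_eq] using hy)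
          have ha : 0 < a := by
            have h1 : F (F^[j] b - ε / 2) < F (F^[j] b + ε / 2) := hmono (by linarith)
            rw [haff _ (by rw [show F^[j] b - ε/2 - F^[j] b = -(ε/2) by ring,
                  abs_neg, abs_of_pos (by linarith)]; linarith),
                haff _ (by rw [show F^[j] b + ε/2 - F^[j] b = ε/2 by ring,
                  abs_of_pos (by linarith)]; linarith)] at h1
            nlinarith
          have hj : j ≠ 0 := by
            rintro rfl
            exact hx b hb 0 (by simp)
          refine ⟨s, a * c, mul_pos ha hc, fun _ => hs1 (by omega), ?_, ?_⟩
          · rw [Function.iterate_succ']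
            simpa [mul_assoc] using (hFa.hasDerivWithinAt (s := Iic (F^[j] b))).comp b hL hmapsL
          · rw [Function.iterate_succ']
            simpa [mul_assoc] using (hFa.hasDerivWithinAt (s := Ici (F^[j] b))).comp b hR hmapsR
        · push_neg at hx
          obtain ⟨b', hb', k, hk⟩ := hx
          have hbb : b' = b := hlone b' hb' ⟨j, k, Or.inl hk⟩
          rw [hbb] at hk
          have hL' : HasDerivWithinAt F dm (Iic (F^[j] b)) (F^[j] b) := by
            rw [hk]
            have := hdw_translate hlift (Iic b) hdm k
            rwa [Set.image_add_const_Iic] at this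
          have hR' : HasDerivWithinAt F dp (Ici (F^[j] b)) (F^[j] b) := by
            rw [hk]
            have := hdw_translate hlift (Ici b) hdp k
            rwa [Set.image_add_const_Ici] at this
          refine ⟨s + 1, c, hc, fun _ => by omega, ?_, ?_⟩
          · rw [Function.iterate_succ', show c * dm ^ (s + 1) = dm * (c * dm ^ s) by ring]
            exact hL'.comp b hL hmapsL
          · rw [Function.iterate_succ', show c * dp ^ (s + 1) = dp * (c * dp ^ s) by ring]
            exact hR'.comp b hR hmapsR
  obtain ⟨s, c, hc, hs1, hL, hR⟩ := key q
  have hrotL : HasDerivWithinAt (F^[q]) 1 (Iic b) b := by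
    have h0 : HasDerivWithinAt (fun x : ℝ => x + (p : ℝ)) 1 (Iic b) b :=
      ((hasDerivAt_id b).add_const _).hasDerivWithinAt
    exact h0.congr (fun y _ => hper y) (hper b)
  have hrotR : HasDerivWithinAt (F^[q]) 1 (Ici b) b := by
    have h0 : HasDerivWithinAt (fun x : ℝ => x + (p : ℝ)) 1 (Ici b) b :=
      ((hasDerivAt_id b).add_const _).hasDerivWithinAt
    exact h0.congr (fun y _ => hper y) (hper b)
  have e1 : c * dm ^ s = 1 := (uniqueDiffOn_Iic b b self_mem_Iic).eq_deriv _ hL hrotL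
  have e2 : c * dp ^ s = 1 := (uniqueDiffOn_Ici b b self_mem_Ici).eq_deriv _ hR hrotR
  have hsne : s ≠ 0 := by have := hs1 hq; omega
  have hpow : dm ^ s = dp ^ s := mul_left_cancel₀ (ne_of_gt hc) (e1.trans e2.symm)
  exact hne ((pow_left_inj₀ (deriv_nonneg_left hmono hdm) (deriv_nonneg_right hmono hdp) hsne).mp hpow)

end StmtFourAux

/-- a PWL circle homeomorphism conjugate to a rigid rational rotation
(`F^q(x) = x + p`) cannot have a break point whose full orbit contains no other break
point. -/
theorem stmt4 (F : ℝ → ℝ) (B : Finset ℝ) (p : ℤ) (q : ℕ) (hq : 0 < q)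
    (hF : IsPWLLift F B) (hper : ∀ x, F^[q] x = x + p)
    (b : ℝ) (hb : b ∈ B)
    (hlone : ∀ b' ∈ B, SameOrbit F b b' → b' = b) : False :=
  stmt4' F B p q hq hF hper b hb hlone
end

section
/- Let f be a PWL circle homeomorphism with rational rotation number p/q. If the number of break points of f^k is uniformly bounded over all k ≥ 1, then every break point of f lies on a periodic orbit, and hence f is conjugate to the rigid rotation by p/q. -/
open MeasureTheory Filter Set

open Topology
open scoped Classical

noncomputable def DLL (H : ℝ → ℝ) (x : ℝ) : ℝ := derivWithin H (Set.Iic x) x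
noncomputable def DRR (H : ℝ → ℝ) (x : ℝ) : ℝ := derivWithin H (Set.Ici x) x

/-- one-sided piecewise affine with positive slopes -/
def OSA (H : ℝ → ℝ) : Prop :=
  ∀ x : ℝ, ∃ δ > (0:ℝ), ∃ a c a' c' : ℝ, 0 < a ∧ 0 < a' ∧
    (∀ y ∈ Icc (x - δ) x, H y = a * y + c) ∧
    (∀ y ∈ Icc x (x + δ), H y = a' * y + c')

lemma affine_hasDerivWithinAt_left {H : ℝ → ℝ} {x δ a c : ℝ} (hδ : 0 < δ)
    (h : ∀ y ∈ Icc (x - δ) x, H y = a * y + c) :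
    HasDerivWithinAt H a (Iic x) x := by
  have base : HasDerivWithinAt (fun y : ℝ => a * y + c) a (Iic x) x := by
    simpa using (((hasDerivAt_id x).const_mul a).add_const c).hasDerivWithinAt
  apply base.congr_of_eventuallyEq
  · filter_upwards [Icc_mem_nhdsLE_of_mem (by constructor <;> linarith : x ∈ Ioc (x - δ) x)]
      with y hy using h y hy
  · exact h x (by constructor <;> linarith)

lemma affine_hasDerivWithinAt_right {H : ℝ → ℝ} {x δ a c : ℝ} (hδ : 0 < δ)
    (h : ∀ y ∈ Icc x (x + δ), H y = a * y + c) :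
    HasDerivWithinAt H a (Ici x) x := by
  have base : HasDerivWithinAt (fun y : ℝ => a * y + c) a (Ici x) x := by
    simpa using (((hasDerivAt_id x).const_mul a).add_const c).hasDerivWithinAt
  apply base.congr_of_eventuallyEq
  · filter_upwards [Icc_mem_nhdsGE_of_mem (by constructor <;> linarith : x ∈ Ico x (x + δ))]
      with y hy using h y hy
  · exact h x (by constructor <;> linarith)

lemma DLL_eq {H : ℝ → ℝ} {x δ a c : ℝ} (hδ : 0 < δ)
    (h : ∀ y ∈ Icc (x - δ) x, H y = a * y + c) : DLL H x = a :=
  (affine_hasDerivWithinAt_left hδ h).derivWithin (uniqueDiffOn_Iic x x self_mem_Iic)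

lemma DRR_eq {H : ℝ → ℝ} {x δ a c : ℝ} (hδ : 0 < δ)
    (h : ∀ y ∈ Icc x (x + δ), H y = a * y + c) : DRR H x = a :=
  (affine_hasDerivWithinAt_right hδ h).derivWithin (uniqueDiffOn_Ici x x self_mem_Ici)

section
variable {H H₁ H₂ : ℝ → ℝ}

/-- canonical affine pieces with slopes DLL/DRR -/
lemma OSA.pieces (h : OSA H) (x : ℝ) :
    ∃ δ > (0:ℝ), ∃ c c' : ℝ, 0 < DLL H x ∧ 0 < DRR H x ∧
      (∀ y ∈ Icc (x - δ) x, H y = DLL H x * y + c) ∧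
      (∀ y ∈ Icc x (x + δ), H y = DRR H x * y + c') := by
  obtain ⟨δ, hδ, a, c, a', c', ha, ha', hl, hr⟩ := h x
  refine ⟨δ, hδ, c, c', ?_, ?_, ?_, ?_⟩
  · rw [DLL_eq hδ hl]; exact ha
  · rw [DRR_eq hδ hr]; exact ha'
  · rw [DLL_eq hδ hl]; exact hl
  · rw [DRR_eq hδ hr]; exact hr

lemma comp_pieces (h2 : OSA H₂) (h1 : OSA H₁) (x : ℝ) :
    ∃ δ > (0:ℝ), ∃ c c' : ℝ,
      (∀ y ∈ Icc (x - δ) x, (H₂ ∘ H₁) y = (DLL H₂ (H₁ x) * DLL H₁ x) * y + c) ∧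
      (∀ y ∈ Icc x (x + δ), (H₂ ∘ H₁) y = (DRR H₂ (H₁ x) * DRR H₁ x) * y + c') := by
  obtain ⟨δ, hδ, c, c', hA, hA', hl, hr⟩ := h1.pieces x
  obtain ⟨η, hη, d, d', hB, hB', kl, kr⟩ := h2.pieces (H₁ x)
  set a := DLL H₁ x; set a' := DRR H₁ x
  set b := DLL H₂ (H₁ x); set b' := DRR H₂ (H₁ x)
  refine ⟨min δ (min (η/a) (η/a')), by positivity, b*c+d, b'*c'+d', ?_, ?_⟩
  · intro y hy
    obtain ⟨hy1, hy2⟩ := hy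
    have h1y : H₁ y = a * y + c := hl y ⟨by
      have := min_le_left δ (min (η/a) (η/a')); linarith, hy2⟩
    have hxv : H₁ x = a * x + c := hl x ⟨by linarith, le_refl x⟩
    have key : H₁ y ∈ Icc (H₁ x - η) (H₁ x) := by
      have h3 : y - x ≥ -(η/a) := by
        have := (min_le_right δ (min (η/a) (η/a'))).trans (min_le_left _ _); linarith
      constructor
      · rw [h1y, hxv]
        have : a * (y - x) ≥ -η := by
          have := mul_le_mul_of_nonneg_left (neg_le.mpr ?_ : -(y-x) ≤ η/a) (le_of_lt hA)
          · rw [mul_div_cancel₀ _ (ne_of_gt hA)] at this; nlinarith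
          · linarith
        nlinarith
      · rw [h1y, hxv]; nlinarith
    have hv := kl (H₁ y) key
    rw [h1y] at hv
    simp only [Function.comp_apply, hv, h1y]; ring
  · intro y hy
    obtain ⟨hy1, hy2⟩ := hy
    have h1y : H₁ y = a' * y + c' := hr y ⟨hy1, by
      have := min_le_left δ (min (η/a) (η/a')); linarith⟩
    have hxv : H₁ x = a' * x + c' := hr x ⟨le_refl x, by linarith⟩
    have key : H₁ y ∈ Icc (H₁ x) (H₁ x + η) := by
      have h3 : y - x ≤ η/a' := by
        have := (min_le_right δ (min (η/a) (η/a'))).trans (min_le_right _ _); linarith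
      constructor
      · rw [h1y, hxv]; nlinarith
      · rw [h1y, hxv]
        have : a' * (y - x) ≤ η := by
          have := mul_le_mul_of_nonneg_left h3 (le_of_lt hA')
          rw [mul_div_cancel₀ _ (ne_of_gt hA')] at this; nlinarith
        nlinarith
    have hv := kr (H₁ y) key
    rw [h1y] at hv
    simp only [Function.comp_apply, hv, h1y]; ring

lemma OSA.comp (h2 : OSA H₂) (h1 : OSA H₁) : OSA (H₂ ∘ H₁) := by
  intro x
  obtain ⟨δ, hδ, c, c', hl, hr⟩ := comp_pieces h2 h1 x
  obtain ⟨_, _, _, _, hA, hA', _, _⟩ := h1.pieces x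
  obtain ⟨_, _, _, _, hB, hB', _, _⟩ := h2.pieces (H₁ x)
  exact ⟨δ, hδ, _, c, _, c', by positivity, by positivity, hl, hr⟩

lemma DLL_comp (h2 : OSA H₂) (h1 : OSA H₁) (x : ℝ) :
    DLL (H₂ ∘ H₁) x = DLL H₂ (H₁ x) * DLL H₁ x := by
  obtain ⟨δ, hδ, c, c', hl, _⟩ := comp_pieces h2 h1 x
  exact DLL_eq hδ hl

lemma DRR_comp (h2 : OSA H₂) (h1 : OSA H₁) (x : ℝ) :
    DRR (H₂ ∘ H₁) x = DRR H₂ (H₁ x) * DRR H₁ x := by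
  obtain ⟨δ, hδ, c, c', _, hr⟩ := comp_pieces h2 h1 x
  exact DRR_eq hδ hr

lemma OSA.DLL_pos (h : OSA H) (x : ℝ) : 0 < DLL H x := by
  obtain ⟨_, _, _, _, h1, _, _, _⟩ := h.pieces x; exact h1

lemma OSA.DRR_pos (h : OSA H) (x : ℝ) : 0 < DRR H x := by
  obtain ⟨_, _, _, _, _, h1, _, _⟩ := h.pieces x; exact h1

lemma OSA.iterate (h : OSA H) (n : ℕ) : OSA (H^[n]) := by
  induction n with
  | zero =>
      intro x
      exact ⟨1, one_pos, 1, 0, 1, 0, one_pos, one_pos, fun y _ => by simp, fun y _ => by simp⟩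
  | succ n ih =>
      rw [Function.iterate_succ']
      exact h.comp ih

lemma DLL_iterate (h : OSA H) (n : ℕ) (x : ℝ) :
    DLL (H^[n]) x = ∏ i ∈ Finset.range n, DLL H (H^[i] x) := by
  induction n with
  | zero =>
      simp only [Function.iterate_zero, Finset.range_zero, Finset.prod_empty]
      exact DLL_eq (a := 1) (c := 0) one_pos (fun y _ => by simp)
  | succ n ih =>
      rw [Function.iterate_succ', DLL_comp h (h.iterate n), ih, Finset.prod_range_succ,
        mul_comm]

lemma DRR_iterate (h : OSA H) (n : ℕ) (x : ℝ) :
    DRR (H^[n]) x = ∏ i ∈ Finset.range n, DRR H (H^[i] x) := by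
  induction n with
  | zero =>
      simp only [Function.iterate_zero, Finset.range_zero, Finset.prod_empty]
      exact DRR_eq (a := 1) (c := 0) one_pos (fun y _ => by simp)
  | succ n ih =>
      rw [Function.iterate_succ', DRR_comp h (h.iterate n), ih, Finset.prod_range_succ,
        mul_comm]

lemma OSA.break_of_ne (h : OSA H) {x : ℝ} (hne : DLL H x ≠ DRR H x) :
    IsBreakPoint H x := by
  obtain ⟨δ, hδ, c, c', _, _, hl, hr⟩ := h.pieces x
  exact ⟨DLL H x, DRR H x, hne, affine_hasDerivWithinAt_left hδ hl,
    affine_hasDerivWithinAt_right hδ hr⟩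

/-- two affine maps agreeing on an interval with two points have equal slopes -/
lemma affine_slope_eq {a c a' c' s t : ℝ} (hst : s < t)
    (h : ∀ y ∈ Ioo s t, a * y + c = a' * y + c') : a = a' ∧ c = c' := by
  have h1 := h ((s+t)/2 + (t-s)/4) ⟨by linarith, by linarith⟩
  have h2 := h ((s+t)/2 - (t-s)/4) ⟨by linarith, by linarith⟩
  have ha : a = a' := by nlinarith
  subst ha
  exact ⟨rfl, by nlinarith⟩

/-- equal one-sided slopes → two-sided affine near x -/
lemma OSA.twosided (h : OSA H) {x : ℝ} (he : DLL H x = DRR H x) :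
    ∃ δ > (0:ℝ), ∃ a c : ℝ, ∀ y ∈ Icc (x - δ) (x + δ), H y = a * y + c := by
  obtain ⟨δ, hδ, c, c', _, _, hl, hr⟩ := h.pieces x
  have hcc : c = c' := by
    have h1 := hl x ⟨by linarith, le_refl x⟩
    have h2 := hr x ⟨le_refl x, by linarith⟩
    rw [h1, he] at h2; linarith
  refine ⟨δ, hδ, DRR H x, c', fun y hy => ?_⟩
  rcases le_or_gt y x with hyx | hyx
  · rw [hl y ⟨hy.1, hyx⟩, he, hcc]
  · exact hr y ⟨le_of_lt hyx, hy.2⟩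
end

/-- rightward propagation of an affine identity -/
lemma affine_right {H : ℝ → ℝ} {s t y₀ a c ε₀ : ℝ} (hy₀ : y₀ ∈ Ioo s t)
    (hε₀ : 0 < ε₀) (h₀ : ∀ z, |z - y₀| < ε₀ → H z = a * z + c)
    (h : ∀ y ∈ Ioo s t, ∃ ε > (0:ℝ), ∃ a' c' : ℝ, ∀ z, |z - y| < ε → H z = a' * z + c') :
    ∀ y ∈ Ico y₀ t, H y = a * y + c := by
  set A := {y | y ∈ Icc y₀ t ∧ ∀ z ∈ Icc y₀ y, H z = a * z + c} with hA
  have hy₀A : y₀ ∈ A := ⟨⟨le_refl _, le_of_lt hy₀.2⟩, fun z hz => by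
    have : z = y₀ := le_antisymm hz.2 hz.1
    exact h₀ z (by rw [this]; simpa using hε₀)⟩
  have hbdd : BddAbove A := ⟨t, fun y hy => hy.1.2⟩
  set m := sSup A with hm
  have hy₀m : y₀ ≤ m := le_csSup hbdd hy₀A
  have hmt : m ≤ t := csSup_le ⟨y₀, hy₀A⟩ (fun y hy => hy.1.2)
  have hIco : ∀ z ∈ Ico y₀ m, H z = a * z + c := by
    intro z hz
    obtain ⟨y, hyA, hzy⟩ := exists_lt_of_lt_csSup ⟨y₀, hy₀A⟩ hz.2
    exact hyA.2 z ⟨hz.1, le_of_lt hzy⟩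
  have hy₀m' : y₀ < m := by
    have hpos : (0:ℝ) < min (ε₀/2) ((t - y₀)/2) := by
      apply lt_min (by linarith)
      have := hy₀.2; linarith
    have : y₀ + min (ε₀/2) ((t - y₀)/2) ∈ A := by
      refine ⟨⟨by linarith, ?_⟩, ?_⟩
      · have := min_le_right (ε₀/2) ((t - y₀)/2); have := hy₀.2; linarith
      · intro z hz
        apply h₀
        have h1 := hz.1
        have h2 := hz.2
        have := min_le_left (ε₀/2) ((t - y₀)/2)
        rw [abs_lt]; constructor <;> linarith
    have := le_csSup hbdd this
    linarith
  have hmeq : m = t := by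
    by_contra hne
    have hmlt : m < t := lt_of_le_of_ne hmt hne
    have hmem : m ∈ Ioo s t := ⟨lt_of_lt_of_le hy₀.1 hy₀m, hmlt⟩
    obtain ⟨ε₁, hε₁, a₁, c₁, h₁⟩ := h m hmem
    have hov : ∀ y ∈ Ioo (max y₀ (m - ε₁)) m, a * y + c = a₁ * y + c₁ := by
      intro y hy
      have hy1 : y ∈ Ico y₀ m := ⟨le_of_lt (lt_of_le_of_lt (le_max_left _ _) hy.1), hy.2⟩
      rw [← hIco y hy1]
      refine (h₁ y ?_)
      have := lt_of_le_of_lt (le_max_right y₀ (m - ε₁)) hy.1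
      have hym := hy.2
      rw [abs_lt]; constructor <;> [linarith; linarith]
    obtain ⟨ha, hc⟩ := affine_slope_eq (max_lt hy₀m' (by linarith)) hov
    set y' := min ((m+t)/2) (m + ε₁/2) with hy'
    have hy'm : m < y' := by
      apply lt_min (by linarith) (by linarith)
    have : y' ∈ A := by
      refine ⟨⟨by linarith, ?_⟩, ?_⟩
      · have := min_le_left ((m+t)/2) (m + ε₁/2); linarith
      · intro z hz
        rcases lt_or_ge z m with h' | h'
        · exact hIco z ⟨hz.1, h'⟩
        · have hz2 : z ≤ m + ε₁/2 := le_trans hz.2 (min_le_right _ _)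
          rw [ha, hc]
          apply h₁
          rw [abs_lt]; constructor <;> linarith
    have := le_csSup hbdd this
    linarith
  intro y hy
  exact hIco y ⟨hy.1, by rw [hmeq]; exact hy.2⟩

/-- locally affine on an open interval implies affine there -/
lemma affine_of_locally_affine {H : ℝ → ℝ} {s t : ℝ} (hst : s < t)
    (h : ∀ y ∈ Ioo s t, ∃ ε > (0:ℝ), ∃ a c : ℝ, ∀ z, |z - y| < ε → H z = a * z + c) :
    ∃ a c : ℝ, ∀ y ∈ Ioo s t, H y = a * y + c := by
  set y₀ := (s + t)/2 with hy₀def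
  have hy₀ : y₀ ∈ Ioo s t := ⟨by simp only [hy₀def]; linarith, by simp only [hy₀def]; linarith⟩
  obtain ⟨ε₀, hε₀, a, c, h₀⟩ := h y₀ hy₀
  refine ⟨a, c, fun y hy => ?_⟩
  rcases le_or_gt y₀ y with h' | h'
  · exact affine_right hy₀ hε₀ h₀ h y ⟨h', hy.2⟩
  · -- use reflection
    have hy₀' : -y₀ ∈ Ioo (-t) (-s) := ⟨by simp; exact hy₀.2, by simp; exact hy₀.1⟩
    have h₀' : ∀ z, |z - (-y₀)| < ε₀ → (H ∘ Neg.neg) z = (-a) * z + c := by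
      intro z hz
      have : |(-z) - y₀| < ε₀ := by rw [← abs_neg]; convert hz using 2; ring
      have := h₀ (-z) this
      simp only [Function.comp_apply]
      rw [this]; ring
    have h'' : ∀ y ∈ Ioo (-t) (-s), ∃ ε > (0:ℝ), ∃ a' c' : ℝ,
        ∀ z, |z - y| < ε → (H ∘ Neg.neg) z = a' * z + c' := by
      intro y hy
      obtain ⟨ε, hε, a', c', hh⟩ := h (-y) ⟨by simp at hy ⊢; linarith [hy.2], by
        simp at hy ⊢; linarith [hy.1]⟩
      refine ⟨ε, hε, -a', c', fun z hz => ?_⟩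
      have : |(-z) - (-y)| < ε := by rw [← abs_neg]; convert hz using 2; ring
      have := hh (-z) this
      simp only [Function.comp_apply]
      rw [this]; ring
    have := affine_right hy₀' hε₀ h₀' h'' (-y) ⟨by simp; exact le_of_lt h', by simp; exact hy.1⟩
    simp only [Function.comp_apply, neg_neg] at this
    rw [this]; ring

lemma addint {H : ℝ → ℝ} (h : ∀ x, H (x + 1) = H x + 1) (m : ℤ) (x : ℝ) :
    H (x + m) = H x + m := by
  induction m using Int.induction_on with
  | zero => simp
  | succ k ih =>
      push_cast
      have := h (x + k)
      push_cast at ih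
      rw [show x + ((k:ℝ) + 1) = (x + k) + 1 by ring, this, ih]; ring
  | pred k ih =>
      push_cast
      push_cast at ih
      have h2 := h (x + (-(k:ℝ) - 1))
      rw [show x + (-(k:ℝ) - 1) + 1 = x + -(k:ℝ) by ring] at h2
      have h3 : H (x + (-(k:ℝ) - 1)) = H (x + -(k:ℝ)) - 1 := by linarith
      rw [h3, ih]
      ring

lemma iterate_add_one {H : ℝ → ℝ} (h : ∀ x, H (x + 1) = H x + 1) (n : ℕ) (x : ℝ) :
    H^[n] (x + 1) = H^[n] x + 1 := by
  induction n generalizing x with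
  | zero => simp
  | succ n ih => rw [Function.iterate_succ_apply, h, Function.iterate_succ_apply, ih]

lemma lift_surj {H : ℝ → ℝ} (hc : Continuous H) (h : ∀ x, H (x + 1) = H x + 1) :
    Function.Surjective H := by
  intro y
  obtain ⟨n, hn⟩ := exists_nat_gt (|y - H 0|)
  have h1 : H (-(n:ℝ)) ≤ y := by
    have := addint h (-(n:ℤ)) 0
    push_cast at this
    rw [show (0:ℝ) + -(n:ℝ) = -(n:ℝ) by ring] at this
    rw [this]
    have := abs_lt.mp hn
    linarith [this.1]
  have h2 : y ≤ H (n:ℝ) := by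
    have := addint h (n:ℤ) 0
    push_cast at this
    rw [show (0:ℝ) + (n:ℝ) = (n:ℝ) by ring] at this
    rw [this]
    have := abs_lt.mp hn
    linarith [this.2]
  have hle : (-(n:ℝ)) ≤ (n:ℝ) := by push_cast; linarith [Nat.cast_nonneg (α := ℝ) n]
  have := intermediate_value_Icc hle hc.continuousOn
  obtain ⟨x, _, hx⟩ := this ⟨h1, h2⟩
  exact ⟨x, hx⟩

/-- a circle lift with rotation number zero has a fixed point -/
lemma exists_fixed {G : ℝ → ℝ} (hc : Continuous G) (h1 : ∀ x, G (x + 1) = G x + 1)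
    (hrot : Tendsto (fun m : ℕ => (G^[m] 0 - 0) / m) atTop (nhds 0)) :
    ∃ x, G x = x := by
  by_contra hno
  push_neg at hno
  have hsign : (∀ x, G x > x) ∨ (∀ x, G x < x) := by
    by_contra hcon
    push_neg at hcon
    obtain ⟨hns, hns'⟩ := hcon
    obtain ⟨y, hy⟩ := hns
    obtain ⟨z, hz⟩ := hns'
    have hy' : G y < y := lt_of_le_of_ne hy (hno y)
    have hz' : G z > z := lt_of_le_of_ne hz (fun h => hno z h.symm)
    -- IVT for G - id
    have hcont : Continuous (fun x => G x - x) := hc.sub continuous_id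
    rcases le_total y z with hyz | hyz
    · obtain ⟨x, _, hx⟩ := intermediate_value_Icc hyz hcont.continuousOn
        (⟨by linarith, by linarith⟩ : (0:ℝ) ∈ Icc (G y - y) (G z - z))
      exact hno x (by simp only at hx; linarith [hx])
    · obtain ⟨x, _, hx⟩ := intermediate_value_Icc' hyz hcont.continuousOn
        (⟨by linarith, by linarith⟩ : (0:ℝ) ∈ Icc (G y - y) (G z - z))
      exact hno x (by simp only at hx; linarith [hx])
  -- uniform bound on the fundamental domain
  have hper : ∀ x : ℝ, G x - x = G (Int.fract x) - Int.fract x := by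
    intro x
    have hx : x = Int.fract x + (⌊x⌋ : ℤ) := by
      have := Int.fract_add_floor x; linarith
    calc G x - x = G (Int.fract x + (⌊x⌋ : ℤ)) - (Int.fract x + (⌊x⌋ : ℤ)) := by rw [← hx]
    _ = G (Int.fract x) - Int.fract x := by rw [addint h1]; ring
  -- compact interval: extract uniform gap
  have hcomp : ∃ ε > (0:ℝ), ∀ x : ℝ, |G x - x| ≥ ε := by
    have hK : IsCompact (Icc (0:ℝ) 1) := isCompact_Icc
    have hcont : ContinuousOn (fun x => |G x - x|) (Icc 0 1) :=
      ((hc.sub continuous_id).abs).continuousOn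
    obtain ⟨x₀, hx₀, hmin'⟩ := hK.exists_isMinOn (⟨0, by norm_num⟩ : (Icc (0:ℝ) 1).Nonempty) hcont
    have hmin : ∀ y ∈ Icc (0:ℝ) 1, |G x₀ - x₀| ≤ |G y - y| := fun y hy => hmin' hy
    refine ⟨|G x₀ - x₀|, abs_pos.mpr (sub_ne_zero.mpr (hno x₀)), fun x => ?_⟩
    have hf : Int.fract x ∈ Icc (0:ℝ) 1 := ⟨Int.fract_nonneg x, le_of_lt (Int.fract_lt_one x)⟩
    calc |G x₀ - x₀| ≤ |G (Int.fract x) - Int.fract x| := hmin _ hf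
    _ = |G x - x| := by rw [hper x]
  obtain ⟨ε, hε, hgap⟩ := hcomp
  rcases hsign with hpos | hneg
  · have hstep : ∀ x, x + ε ≤ G x := by
      intro x
      have h1 := hgap x
      have h2 := hpos x
      rw [abs_of_pos (by linarith)] at h1
      linarith
    have key : ∀ m : ℕ, (m:ℝ) * ε ≤ G^[m] 0 := by
      intro m
      induction m with
      | zero => simp
      | succ m ih =>
          rw [Function.iterate_succ_apply']
          have := hstep (G^[m] 0)
          push_cast
          linarith
    have hev : ∀ᶠ m : ℕ in atTop, ε ≤ (G^[m] 0 - 0) / m := by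
      filter_upwards [eventually_ge_atTop 1] with m hm
      have := key m
      have hm' : (0:ℝ) < m := by exact_mod_cast Nat.pos_of_ne_zero (by omega)
      rw [le_div_iff₀ hm']
      linarith
    have := ge_of_tendsto hrot hev
    linarith
  · have hstep : ∀ x, G x ≤ x - ε := by
      intro x
      have h1 := hgap x
      have h2 := hneg x
      rw [abs_of_neg (by linarith)] at h1
      linarith
    have key : ∀ m : ℕ, G^[m] 0 ≤ -((m:ℝ) * ε) := by
      intro m
      induction m with
      | zero => simp
      | succ m ih =>
          rw [Function.iterate_succ_apply']
          have h3 := hstep (G^[m] 0)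
          have h4 : G (G^[m] 0) ≤ G^[m] 0 - ε := h3
          push_cast
          linarith
    have hev : ∀ᶠ m : ℕ in atTop, (G^[m] 0 - 0) / m ≤ -ε := by
      filter_upwards [eventually_ge_atTop 1] with m hm
      have := key m
      have hm' : (0:ℝ) < m := by exact_mod_cast Nat.pos_of_ne_zero (by omega)
      rw [div_le_iff₀ hm']
      have : -((m:ℝ)*ε) = (-ε) * m := by ring
      linarith [key m]
    have := le_of_tendsto hrot hev
    linarith

lemma BZ_finite (B : Finset ℝ) (M₁ M₂ : ℝ) :
    Set.Finite {x : ℝ | (∃ b ∈ B, ∃ k : ℤ, x = b + k) ∧ x ∈ Icc M₁ M₂} := by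
  have hsub : {x : ℝ | (∃ b ∈ B, ∃ k : ℤ, x = b + k) ∧ x ∈ Icc M₁ M₂} ⊆
      ⋃ b ∈ (B : Set ℝ), (fun k : ℤ => b + (k:ℝ)) '' (Icc ⌈M₁ - b⌉ ⌊M₂ - b⌋ : Set ℤ) := by
    rintro x ⟨⟨b, hb, k, rfl⟩, hx1, hx2⟩
    refine mem_biUnion hb ⟨k, ⟨?_, ?_⟩, rfl⟩
    · exact Int.ceil_le.mpr (by linarith)
    · exact Int.le_floor.mpr (by linarith)
  exact Set.Finite.subset (Set.Finite.biUnion B.finite_toSet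
    (fun b _ => (Set.finite_Icc _ _).image _)) hsub

lemma avoid_nearby (B : Finset ℝ) (x : ℝ) :
    ∃ δ > (0:ℝ), δ ≤ 1 ∧ ∀ y : ℝ, y ≠ x → |y - x| < δ → ¬∃ b ∈ B, ∃ k : ℤ, y = b + k := by
  classical
  set Wf := ((BZ_finite B (x-1) (x+1)).toFinset.erase x) with hWf
  by_cases hW : Wf = ∅
  · refine ⟨1, one_pos, le_refl 1, fun y hyx hy hmem => ?_⟩
    have : y ∈ Wf := by
      rw [hWf, Finset.mem_erase]
      refine ⟨hyx, ?_⟩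
      rw [Set.Finite.mem_toFinset]
      refine ⟨hmem, ?_, ?_⟩ <;> [linarith [abs_lt.mp hy]; linarith [(abs_lt.mp hy).2]]
    rw [hW] at this; exact absurd this (Finset.notMem_empty y)
  · have hne : Wf.Nonempty := Finset.nonempty_of_ne_empty hW
    set δ := Wf.inf' hne (fun d => |d - x|) with hδ
    have hδpos : 0 < δ := by
      rw [hδ, Finset.lt_inf'_iff]
      intro d hd
      have : d ≠ x := (Finset.mem_erase.mp hd).1
      exact abs_pos.mpr (sub_ne_zero.mpr this)
    refine ⟨min δ 1, lt_min hδpos one_pos, min_le_right _ _, fun y hyx hy hmem => ?_⟩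
    have h1 : |y - x| < 1 := lt_of_lt_of_le hy (min_le_right _ _)
    have : y ∈ Wf := by
      rw [hWf, Finset.mem_erase]
      refine ⟨hyx, ?_⟩
      rw [Set.Finite.mem_toFinset]
      refine ⟨hmem, ?_, ?_⟩ <;> [linarith [(abs_lt.mp h1).1]; linarith [(abs_lt.mp h1).2]]
    have := Finset.inf'_le (fun d => |d - x|) this
    have h2 : |y - x| < δ := lt_of_lt_of_le hy (min_le_left _ _)
    rw [← hδ] at this
    linarith

lemma affine_ext_left {H : ℝ → ℝ} (hc : Continuous H) {x t a c : ℝ} (hxt : x < t)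
    (h : ∀ y ∈ Ioo x t, H y = a * y + c) : H x = a * x + c := by
  have l1 : Tendsto H (𝓝[>] x) (𝓝 (H x)) := (hc.tendsto x).mono_left nhdsWithin_le_nhds
  have l2 : Tendsto (fun y => a * y + c) (𝓝[>] x) (𝓝 (a * x + c)) :=
    (((continuous_const.mul continuous_id).add continuous_const).tendsto x).mono_left
      nhdsWithin_le_nhds
  have ev : H =ᶠ[𝓝[>] x] (fun y => a * y + c) := by
    filter_upwards [Ioo_mem_nhdsGT_of_mem (⟨le_refl x, hxt⟩ : x ∈ Ico x t)] with y hy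
    exact h y hy
  exact tendsto_nhds_unique (l1.congr' ev) l2

lemma affine_ext_right {H : ℝ → ℝ} (hc : Continuous H) {s x a c : ℝ} (hsx : s < x)
    (h : ∀ y ∈ Ioo s x, H y = a * y + c) : H x = a * x + c := by
  have l1 : Tendsto H (𝓝[<] x) (𝓝 (H x)) := (hc.tendsto x).mono_left nhdsWithin_le_nhds
  have l2 : Tendsto (fun y => a * y + c) (𝓝[<] x) (𝓝 (a * x + c)) :=
    (((continuous_const.mul continuous_id).add continuous_const).tendsto x).mono_left
      nhdsWithin_le_nhds
  have ev : H =ᶠ[𝓝[<] x] (fun y => a * y + c) := by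
    filter_upwards [Ioo_mem_nhdsLT_of_mem (⟨hsx, le_refl x⟩ : x ∈ Ioc s x)] with y hy
    exact h y hy
  exact tendsto_nhds_unique (l1.congr' ev) l2

lemma pwl_OSA {F : ℝ → ℝ} {B : Finset ℝ} (hc : Continuous F) (hm : StrictMono F)
    (haff : ∀ x : ℝ, (∀ b ∈ B, ∀ k : ℤ, x ≠ b + k) →
      ∃ ε > (0:ℝ), ∃ a c : ℝ, ∀ y, |y - x| < ε → F y = a * y + c) : OSA F := by
  intro x
  obtain ⟨δ, hδ, hδ1, havoid⟩ := avoid_nearby B x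
  have hloc : ∀ s t : ℝ, Ioo s t ⊆ Ioo (x - δ) (x + δ) → x ∉ Ioo s t →
      ∀ y ∈ Ioo s t, ∃ ε > (0:ℝ), ∃ a c : ℝ, ∀ z, |z - y| < ε → F z = a * z + c := by
    intro s t hsub hx y hy
    have h1 := hsub hy
    have hyx : y ≠ x := fun h => hx (h ▸ hy)
    have h2 : |y - x| < δ := abs_lt.mpr ⟨by linarith [h1.1], by linarith [h1.2]⟩
    have h3 := havoid y hyx h2
    push_neg at h3
    exact haff y (fun b hb k => h3 b hb k)
  -- right piece
  obtain ⟨a', c', hr⟩ := affine_of_locally_affine (by linarith : x < x + δ)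
    (hloc x (x + δ) (fun z hz => ⟨by linarith [hz.1], hz.2⟩) (fun h => lt_irrefl x h.1))
  -- left piece
  obtain ⟨a, c, hl⟩ := affine_of_locally_affine (by linarith : x - δ < x)
    (hloc (x - δ) x (fun z hz => ⟨hz.1, by linarith [hz.2]⟩) (fun h => lt_irrefl x h.2))
  have hrx : F x = a' * x + c' := affine_ext_left hc (by linarith) hr
  have hlx : F x = a * x + c := affine_ext_right hc (by linarith) hl
  have hrIcc : ∀ y ∈ Icc x (x + δ/2), F y = a' * y + c' := by
    intro y hy
    rcases eq_or_lt_of_le hy.1 with h | h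
    · rw [← h]; exact hrx
    · exact hr y ⟨h, by linarith [hy.2]⟩
  have hlIcc : ∀ y ∈ Icc (x - δ/2) x, F y = a * y + c := by
    intro y hy
    rcases eq_or_lt_of_le hy.2 with h | h
    · rw [h]; exact hlx
    · exact hl y ⟨by linarith [hy.1], h⟩
  have ha' : 0 < a' := by
    have h1 := hrIcc (x + δ/4) ⟨by linarith, by linarith⟩
    have h2 := hrIcc (x + δ/2) ⟨by linarith, by linarith⟩
    have := hm (show x + δ/4 < x + δ/2 by linarith)
    rw [h1, h2] at this
    nlinarith
  have ha : 0 < a := by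
    have h1 := hlIcc (x - δ/2) ⟨by linarith, by linarith⟩
    have h2 := hlIcc (x - δ/4) ⟨by linarith, by linarith⟩
    have := hm (show x - δ/2 < x - δ/4 by linarith)
    rw [h1, h2] at this
    nlinarith
  exact ⟨δ/2, by linarith, a, c, a', c', ha, ha', hlIcc, hrIcc⟩

lemma slope_match_right {G : ℝ → ℝ} (hosa : OSA G) {s v a c : ℝ} (hsv : s < v)
    (h : ∀ y ∈ Ioo s v, G y = a * y + c) : DRR G s = a := by
  obtain ⟨δ, hδ, c₁, c₂, _, _, _, hr⟩ := hosa.pieces s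
  have key : ∀ y ∈ Ioo s (min (s + δ) v), DRR G s * y + c₂ = a * y + c := by
    intro y hy
    have h1 : y ∈ Icc s (s + δ) := ⟨le_of_lt hy.1, le_of_lt (lt_of_lt_of_le hy.2 (min_le_left _ _))⟩
    have h2 : y ∈ Ioo s v := ⟨hy.1, lt_of_lt_of_le hy.2 (min_le_right _ _)⟩
    rw [← hr y h1, h y h2]
  exact (affine_slope_eq (lt_min (by linarith) hsv) key).1

lemma slope_match_left {G : ℝ → ℝ} (hosa : OSA G) {s v a c : ℝ} (hsv : s < v)
    (h : ∀ y ∈ Ioo s v, G y = a * y + c) : DLL G v = a := by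
  obtain ⟨δ, hδ, c₁, c₂, _, _, hl, _⟩ := hosa.pieces v
  have key : ∀ y ∈ Ioo (max (v - δ) s) v, DLL G v * y + c₁ = a * y + c := by
    intro y hy
    have h1 : y ∈ Icc (v - δ) v :=
      ⟨le_of_lt (lt_of_le_of_lt (le_max_left _ _) hy.1), le_of_lt hy.2⟩
    have h2 : y ∈ Ioo s v := ⟨lt_of_le_of_lt (le_max_right _ _) hy.1, hy.2⟩
    rw [← hl y h1, h y h2]
  exact (affine_slope_eq (max_lt (by linarith) hsv) key).1

/-- affine on a gap interval with prescribed endpoint behaviour -/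
lemma gap_affine {G : ℝ → ℝ} (hosa : OSA G) {s v : ℝ} (hsv : s < v)
    (hnb : ∀ x ∈ Ioo s v, DLL G x = DRR G x) :
    ∃ a c : ℝ, ∀ y ∈ Ioo s v, G y = a * y + c := by
  apply affine_of_locally_affine hsv
  intro y hy
  obtain ⟨δ, hδ, a, c, hf⟩ := hosa.twosided (hnb y hy)
  exact ⟨δ, hδ, a, c, fun z hz => hf z ⟨by linarith [abs_lt.mp hz], by linarith [(abs_lt.mp hz).2]⟩⟩

lemma gap_prod {G : ℝ → ℝ} (hosa : OSA G) :
    ∀ (n : ℕ) (T : Finset ℝ) (s v : ℝ), T.card = n → s < v → (↑T : Set ℝ) ⊆ Ioo s v →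
    (∀ x ∈ Ioo s v, x ∉ T → DLL G x = DRR G x) →
    ∏ d ∈ T, (DLL G d / DRR G d) = DRR G s / DLL G v := by
  intro n
  induction n with
  | zero =>
      intro T s v hcard hsv hsub hnb
      rw [Finset.card_eq_zero.mp hcard]
      obtain ⟨a, c, hac⟩ := gap_affine hosa hsv
        (fun x hx => hnb x hx (by rw [Finset.card_eq_zero.mp hcard]; exact Finset.notMem_empty x))
      rw [Finset.prod_empty, slope_match_right hosa hsv hac, slope_match_left hosa hsv hac,
        div_self]
      rw [← slope_match_left hosa hsv hac]
      obtain ⟨_, _, _, _, h4, _, _, _⟩ := hosa.pieces v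
      exact ne_of_gt h4
  | succ n ih =>
      intro T s v hcard hsv hsub hnb
      have hne : T.Nonempty := Finset.card_pos.mp (by omega)
      set d := T.min' hne with hd
      have hdT : d ∈ T := T.min'_mem hne
      have hdIoo : d ∈ Ioo s v := hsub hdT
      -- affine on the first gap
      obtain ⟨a, c, hac⟩ := gap_affine hosa hdIoo.1 (fun x hx => hnb x ⟨hx.1, lt_trans hx.2 hdIoo.2⟩
        (fun hxT => absurd (T.min'_le x hxT) (not_le.mpr hx.2)))
      have h1 : DRR G s = a := slope_match_right hosa hdIoo.1 hac
      have h2 : DLL G d = a := slope_match_left hosa hdIoo.1 hac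
      set T' := T.erase d with hT'
      have hsub' : (↑T' : Set ℝ) ⊆ Ioo d v := by
        intro x hx
        have hxT : x ∈ T := Finset.mem_of_mem_erase hx
        have hxd : x ≠ d := Finset.ne_of_mem_erase hx
        exact ⟨lt_of_le_of_ne (T.min'_le x hxT) (Ne.symm hxd), (hsub hxT).2⟩
      have hnb' : ∀ x ∈ Ioo d v, x ∉ T' → DLL G x = DRR G x := by
        intro x hx hxT'
        by_cases hxd : x = d
        · exact absurd hxd (ne_of_gt hx.1)
        · exact hnb x ⟨lt_trans hdIoo.1 hx.1, hx.2⟩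
            (fun hxT => hxT' (Finset.mem_erase.mpr ⟨hxd, hxT⟩))
      have hrec := ih T' d v (by rw [hT', Finset.card_erase_of_mem hdT, hcard]; rfl)
        hdIoo.2 hsub' hnb'
      rw [← Finset.mul_prod_erase T _ hdT, ← hT', hrec, h2]
      have hDRRd : DRR G d ≠ 0 := by
        obtain ⟨_, _, _, _, _, h4, _, _⟩ := hosa.pieces d
        exact ne_of_gt h4
      have hDLLv : DLL G v ≠ 0 := by
        obtain ⟨_, _, _, _, h4, _, _, _⟩ := hosa.pieces v
        exact ne_of_gt h4
      field_simp [h1]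
      exact h1.symm

lemma class_prod_one {α : Type*} (R : α → α → Prop)
    (hrefl : ∀ x, R x x) (hsym : ∀ {x y}, R x y → R y x)
    (htrans : ∀ {x y z}, R x y → R y z → R x z)
    (σ : α → ℝ) (T : Finset α)
    (h : ∀ d ∈ T, ∏ x ∈ T.filter (R d), σ x = 1) :
    ∀ (n : ℕ) (T' : Finset α), T'.card = n → T' ⊆ T →
    (∀ d ∈ T', ∀ x ∈ T, R d x → x ∈ T') → ∏ x ∈ T', σ x = 1 := by
  intro n
  induction n using Nat.strong_induction_on with
  | _ n ih =>
    intro T' hcard hsubT hcl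
    rcases Finset.eq_empty_or_nonempty T' with rfl | hne
    · simp
    obtain ⟨d, hd⟩ := hne
    set K := T.filter (R d) with hK
    have hKsub : K ⊆ T' := by
      intro x hx
      rw [hK, Finset.mem_filter] at hx
      exact hcl d hd x hx.1 hx.2
    have hdK : d ∈ K := by
      rw [hK, Finset.mem_filter]
      exact ⟨hsubT hd, hrefl d⟩
    have hprod : (∏ x ∈ T' \ K, σ x) * ∏ x ∈ K, σ x = ∏ x ∈ T', σ x :=
      Finset.prod_sdiff hKsub
    have hKprod : ∏ x ∈ K, σ x = 1 := h d (hsubT hd)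
    have hcard' : (T' \ K).card < n := by
      have h1 : (T' \ K).card = T'.card - K.card := Finset.card_sdiff_of_subset hKsub
      have h2 : 0 < K.card := Finset.card_pos.mpr ⟨d, hdK⟩
      have h3 : K.card ≤ T'.card := Finset.card_le_card hKsub
      omega
    have hrec := ih (T' \ K).card hcard' (T' \ K) rfl
      (fun x hx => hsubT (Finset.mem_sdiff.mp hx).1) ?_
    · rw [← hprod, hKprod, hrec, one_mul]
    · intro d' hd' x hxT hRd'
      obtain ⟨hd'T', hd'K⟩ := Finset.mem_sdiff.mp hd'
      rw [Finset.mem_sdiff]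
      refine ⟨hcl d' hd'T' x hxT hRd', fun hxK => ?_⟩
      apply hd'K
      rw [hK, Finset.mem_filter] at hxK ⊢
      exact ⟨hsubT hd'T', htrans hxK.2 (hsym hRd')⟩

/-- break points translate by integers -/
lemma break_translate {H : ℝ → ℝ} (h1 : ∀ x, H (x + 1) = H x + 1) (m : ℤ) {x : ℝ}
    (hb : IsBreakPoint H x) : IsBreakPoint H (x + m) := by
  obtain ⟨dm, dp, hne, hdm, hdp⟩ := hb
  have hfun : H = fun y => H (y - m) + m := by
    funext y
    have := addint h1 m (y - m)
    rw [show (y - (m:ℝ)) + m = y by ring] at this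
    rw [this]
  refine ⟨dm, dp, hne, ?_, ?_⟩
  · rw [hfun]
    have hinner : HasDerivWithinAt (fun y : ℝ => y - (m:ℝ)) 1 (Iic (x + m)) (x + m) := by
      simpa using ((hasDerivAt_id (x + (m:ℝ))).sub_const (m:ℝ)).hasDerivWithinAt
    have hmaps : MapsTo (fun y : ℝ => y - (m:ℝ)) (Iic (x + m)) (Iic x) := by
      intro y hy
      simp only [mem_Iic] at hy ⊢
      linarith
    have hcomp := HasDerivWithinAt.comp (x + (m:ℝ))
      (by rw [show x + (m:ℝ) - m = x by ring] at *; exact hdm) hinner hmaps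
    simpa using hcomp.add_const (m:ℝ)
  · rw [hfun]
    have hinner : HasDerivWithinAt (fun y : ℝ => y - (m:ℝ)) 1 (Ici (x + m)) (x + m) := by
      simpa using ((hasDerivAt_id (x + (m:ℝ))).sub_const (m:ℝ)).hasDerivWithinAt
    have hmaps : MapsTo (fun y : ℝ => y - (m:ℝ)) (Ici (x + m)) (Ici x) := by
      intro y hy
      simp only [mem_Ici] at hy ⊢
      linarith
    have hcomp := HasDerivWithinAt.comp (x + (m:ℝ))
      (by rw [show x + (m:ℝ) - m = x by ring] at *; exact hdp) hinner hmaps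
    simpa using hcomp.add_const (m:ℝ)

lemma break_add_const {H : ℝ → ℝ} {C x : ℝ} (hb : IsBreakPoint H x) :
    IsBreakPoint (fun y => H y + C) x := by
  obtain ⟨dm, dp, hne, hdm, hdp⟩ := hb
  exact ⟨dm, dp, hne, hdm.add_const C, hdp.add_const C⟩

lemma break_neg {H : ℝ → ℝ} {x : ℝ} (hb : IsBreakPoint (fun y => -(H (-y))) x) :
    IsBreakPoint H (-x) := by
  obtain ⟨dm, dp, hne, hdm, hdp⟩ := hb
  have hfun : H = fun t => -((fun y => -(H (-y))) (-t)) := by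
    funext t; simp
  rw [hfun]
  have hinner1 : HasDerivWithinAt (fun t : ℝ => -t) (-1) (Ici (-x)) (-x) := by
    simpa using (hasDerivAt_neg (-x)).hasDerivWithinAt
  have hinner2 : HasDerivWithinAt (fun t : ℝ => -t) (-1) (Iic (-x)) (-x) := by
    simpa using (hasDerivAt_neg (-x)).hasDerivWithinAt
  have hmaps1 : MapsTo (fun t : ℝ => -t) (Ici (-x)) (Iic x) := fun y hy => by
    simp only [mem_Ici] at hy; simp only [mem_Iic]; linarith
  have hmaps2 : MapsTo (fun t : ℝ => -t) (Iic (-x)) (Ici x) := fun y hy => by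
    simp only [mem_Iic] at hy; simp only [mem_Ici]; linarith
  have hc1 := HasDerivWithinAt.comp (-x) (by simpa using hdm) hinner1 hmaps1
  have hc2 := HasDerivWithinAt.comp (-x) (by simpa using hdp) hinner2 hmaps2
  refine ⟨dp, dm, Ne.symm hne, ?_, ?_⟩
  · simpa [Function.comp_def, Pi.neg_def] using hc2.neg
  · simpa [Function.comp_def, Pi.neg_def] using hc1.neg

lemma refl_iter (G : ℝ → ℝ) (n : ℕ) (x : ℝ) :
    (fun y => -(G (-y)))^[n] x = -(G^[n] (-x)) := by
  induction n generalizing x with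
  | zero => simp
  | succ n ih =>
      rw [Function.iterate_succ_apply, Function.iterate_succ_apply, ih]
      simp

lemma refl_DRR {G : ℝ → ℝ} (hosa : OSA G) (x : ℝ) :
    DRR (fun y => -(G (-y))) x = DLL G (-x) := by
  obtain ⟨δ, hδ, a, c, a', c', ha, _, hl, _⟩ := hosa (-x)
  rw [DLL_eq hδ hl]
  refine DRR_eq (a := a) (c := -c) hδ ?_
  intro y hy
  have h2 : -y ∈ Icc (-x - δ) (-x) := ⟨by linarith [hy.2], by linarith [hy.1]⟩
  show -(G (-y)) = a * y + -c
  rw [hl (-y) h2]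
  ring
lemma refl_DLL {G : ℝ → ℝ} (hosa : OSA G) (x : ℝ) :
    DLL (fun y => -(G (-y))) x = DRR G (-x) := by
  obtain ⟨δ, hδ, a, c, a', c', _, ha', _, hr⟩ := hosa (-x)
  rw [DRR_eq hδ hr]
  refine DLL_eq (a := a') (c := -c') hδ ?_
  intro y hy
  have h2 : -y ∈ Icc (-x) (-x + δ) := ⟨by linarith [hy.2], by linarith [hy.1]⟩
  show -(G (-y)) = a' * y + -c'
  rw [hr (-y) h2]
  ring

lemma refl_OSA {G : ℝ → ℝ} (hosa : OSA G) : OSA (fun y => -(G (-y))) := by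
  intro x
  obtain ⟨δ, hδ, a, c, a', c', ha, ha', hl, hr⟩ := hosa (-x)
  refine ⟨δ, hδ, a', -c', a, -c, ha', ha, ?_, ?_⟩
  · intro y hy
    have h2 : -y ∈ Icc (-x) (-x + δ) := ⟨by linarith [hy.2], by linarith [hy.1]⟩
    show -(G (-y)) = a' * y + -c'
    rw [hr (-y) h2]; ring
  · intro y hy
    have h2 : -y ∈ Icc (-x - δ) (-x) := ⟨by linarith [hy.2], by linarith [hy.1]⟩
    show -(G (-y)) = a * y + -c
    rw [hl (-y) h2]; ring

/-- two-sided affine gives equal one-sided slopes -/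
lemma twoside_eq {H : ℝ → ℝ} {x ε a c : ℝ} (hε : 0 < ε)
    (h : ∀ z, |z - x| < ε → H z = a * z + c) : DLL H x = DRR H x := by
  have hl : ∀ y ∈ Icc (x - ε/2) x, H y = a * y + c := fun y hy =>
    h y (abs_lt.mpr ⟨by linarith [hy.1], by linarith [hy.2]⟩)
  have hr : ∀ y ∈ Icc x (x + ε/2), H y = a * y + c := fun y hy =>
    h y (abs_lt.mpr ⟨by linarith [hy.1], by linarith [hy.2]⟩)
  rw [DLL_eq (by linarith : (0:ℝ) < ε/2) hl, DRR_eq (by linarith : (0:ℝ) < ε/2) hr]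

/-- local affinity of iterates at points whose orbit avoids the break set -/
lemma loc_affine_iter {F : ℝ → ℝ} (q : ℕ) (x : ℝ)
    (haff : ∀ i < q, ∃ ε > (0:ℝ), ∃ a c : ℝ, ∀ z, |z - F^[i] x| < ε → F z = a * z + c) :
    ∃ ε > (0:ℝ), ∃ a c : ℝ, ∀ z, |z - x| < ε → F^[q] z = a * z + c := by
  induction q with
  | zero => exact ⟨1, one_pos, 1, 0, fun z _ => by simp⟩
  | succ n ih =>
      obtain ⟨ε, hε, a, c, hac⟩ := ih (fun i hi => haff i (by omega))
      obtain ⟨ε', hε', a', c', hac'⟩ := haff n (by omega)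
      refine ⟨min ε (ε' / (|a| + 1)), lt_min hε (by positivity), a' * a, a' * c + c',
        fun z hz => ?_⟩
      have hz1 : |z - x| < ε := lt_of_lt_of_le hz (min_le_left _ _)
      have hz2 : |z - x| < ε' / (|a| + 1) := lt_of_lt_of_le hz (min_le_right _ _)
      have h1 : F^[n] z = a * z + c := hac z hz1
      have h2 : F^[n] x = a * x + c := hac x (by simpa using hε)
      have h3 : |F^[n] z - F^[n] x| < ε' := by
        rw [h1, h2]
        have : a * z + c - (a * x + c) = a * (z - x) := by ring
        rw [this, abs_mul]
        calc |a| * |z - x| ≤ (|a| + 1) * |z - x| := by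
              apply mul_le_mul_of_nonneg_right (by linarith) (abs_nonneg _)
        _ < (|a| + 1) * (ε' / (|a| + 1)) := by
              apply mul_lt_mul_of_pos_left hz2 (by positivity)
        _ = ε' := by field_simp
      rw [Function.iterate_succ_apply', hac' (F^[n] z) h3, h1]
      ring

/-- finiteness of the slope-mismatch set of G = F^[q] - p in a bounded interval -/
lemma G_fin {F : ℝ → ℝ} {B : Finset ℝ} {p : ℤ} {q : ℕ}
    (hmono : StrictMono F)
    (haff : ∀ x : ℝ, (∀ b ∈ B, ∀ k : ℤ, x ≠ b + k) →
      ∃ ε > (0:ℝ), ∃ a c : ℝ, ∀ y, |y - x| < ε → F y = a * y + c)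
    (u v : ℝ) :
    Set.Finite {x : ℝ | x ∈ Ioo u v ∧
      DLL (fun y => F^[q] y - p) x ≠ DRR (fun y => F^[q] y - p) x} := by
  set G := fun y => F^[q] y - (p:ℝ) with hG
  have hsub : {x : ℝ | x ∈ Ioo u v ∧ DLL G x ≠ DRR G x} ⊆
      ⋃ i ∈ Finset.range q, {x : ℝ | x ∈ Ioo u v ∧ (∃ b ∈ B, ∃ k : ℤ, F^[i] x = b + k)} := by
    intro x hx
    obtain ⟨hxIoo, hxne⟩ := hx
    by_contra hnot
    simp only [mem_iUnion, mem_setOf_eq, not_exists, not_and, Finset.mem_range] at hnot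
    have hallaff : ∀ i < q, ∃ ε > (0:ℝ), ∃ a c : ℝ, ∀ z, |z - F^[i] x| < ε → F z = a * z + c := by
      intro i hi
      apply haff
      intro b hb k heq
      exact hnot i hi hxIoo b hb k heq
    obtain ⟨ε, hε, a, c, hac⟩ := loc_affine_iter q x hallaff
    apply hxne
    exact twoside_eq (a := a) (c := c - p) hε (fun z hz => by
      show F^[q] z - (p:ℝ) = a * z + (c - p)
      rw [hac z hz]; ring)
  apply Set.Finite.subset _ hsub
  apply Set.Finite.biUnion (Finset.range q).finite_toSet
  intro i _
  have hmi : StrictMono (F^[i]) := hmono.iterate i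
  have : {x : ℝ | x ∈ Ioo u v ∧ (∃ b ∈ B, ∃ k : ℤ, F^[i] x = b + k)} ⊆
      F^[i] ⁻¹' {y : ℝ | (∃ b ∈ B, ∃ k : ℤ, y = b + k) ∧ y ∈ Icc (F^[i] u) (F^[i] v)} := by
    intro x hx
    simp only [mem_preimage, mem_setOf_eq]
    exact ⟨hx.2, le_of_lt (hmi hx.1.1), le_of_lt (hmi hx.1.2)⟩
  apply Set.Finite.subset _ this
  exact Set.Finite.preimage hmi.injective.injOn (BZ_finite B _ _)

lemma DLL_shift {H : ℝ → ℝ} (h1 : ∀ x, H (x + 1) = H x + 1) (hosa : OSA H) (m : ℤ) (x : ℝ) :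
    DLL H (x + m) = DLL H x := by
  obtain ⟨δ, hδ, c, c', _, _, hl, _⟩ := hosa.pieces x
  refine DLL_eq (a := DLL H x) (c := c + m - DLL H x * m) hδ ?_
  intro y hy
  have hy' : y - m ∈ Icc (x - δ) x := ⟨by linarith [hy.1], by linarith [hy.2]⟩
  have := hl (y - m) hy'
  have h2 : H ((y - m) + m) = H (y - m) + m := addint h1 m (y - m)
  rw [show (y - (m:ℝ)) + m = y by ring] at h2
  rw [h2, this]; ring

lemma DRR_shift {H : ℝ → ℝ} (h1 : ∀ x, H (x + 1) = H x + 1) (hosa : OSA H) (m : ℤ) (x : ℝ) :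
    DRR H (x + m) = DRR H x := by
  obtain ⟨δ, hδ, c, c', _, _, _, hr⟩ := hosa.pieces x
  refine DRR_eq (a := DRR H x) (c := c' + m - DRR H x * m) hδ ?_
  intro y hy
  have hy' : y - m ∈ Icc x (x + δ) := ⟨by linarith [hy.1], by linarith [hy.2]⟩
  have := hr (y - m) hy'
  have h2 : H ((y - m) + m) = H (y - m) + m := addint h1 m (y - m)
  rw [show (y - (m:ℝ)) + m = y by ring] at h2
  rw [h2, this]; ring

lemma main_breaks {G : ℝ → ℝ} (hc : Continuous G) (hm : StrictMono G)
    (h1 : ∀ x, G (x + 1) = G x + 1) (hosa : OSA G)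
    (hfin : ∀ u v : ℝ, Set.Finite {x : ℝ | x ∈ Ioo u v ∧ DLL G x ≠ DRR G x})
    (hfix : ∃ x, G x = x) {z : ℝ} (hz : z < G z) (M : ℕ) :
    ∃ n : ℕ, 1 ≤ n ∧ ∃ C : Finset ℝ, M ≤ C.card ∧ (↑C : Set ℝ) ⊆ Ico (0:ℝ) 1 ∧
      ∀ y ∈ C, IsBreakPoint (G^[n]) y := by
  -- the fixed point set and the gap (u, v) around z
  set P := {x : ℝ | G x = x} with hP
  have hPclosed : IsClosed P := isClosed_eq hc continuous_id
  obtain ⟨x₀, hx₀⟩ := hfix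
  have hPint : ∀ m : ℤ, (x₀ + m) ∈ P := by
    intro m
    simp only [hP, mem_setOf_eq, addint h1 m x₀, hx₀]
  have hPlow : ∃ y ∈ P ∩ Iic z, True := by
    refine ⟨x₀ + (⌊z - x₀⌋ : ℤ), ⟨hPint _, ?_⟩, trivial⟩
    simp only [mem_Iic]
    linarith [Int.floor_le (z - x₀)]
  have hPhigh : ∃ y ∈ P ∩ Ici z, True := by
    refine ⟨x₀ + (⌈z - x₀⌉ : ℤ), ⟨hPint _, ?_⟩, trivial⟩
    simp only [mem_Ici]
    linarith [Int.le_ceil (z - x₀)]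
  obtain ⟨ylow, hylow, -⟩ := hPlow
  obtain ⟨yhigh, hyhigh, -⟩ := hPhigh
  set u := sSup (P ∩ Iic z) with hu
  set v := sInf (P ∩ Ici z) with hv
  have huP : u ∈ P ∩ Iic z := by
    apply IsClosed.csSup_mem (hPclosed.inter isClosed_Iic) ⟨ylow, hylow⟩
    exact ⟨z, fun y hy => hy.2⟩
  have hvP : v ∈ P ∩ Ici z := by
    apply IsClosed.csInf_mem (hPclosed.inter isClosed_Ici) ⟨yhigh, hyhigh⟩
    exact ⟨z, fun y hy => hy.2⟩
  have hzP : z ∉ P := by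
    intro h
    simp only [hP, mem_setOf_eq] at h
    linarith
  have huz : u < z := lt_of_le_of_ne huP.2 (fun h => hzP (h ▸ huP.1))
  have hzv : z < v := lt_of_le_of_ne hvP.2 (fun h => hzP (h ▸ hvP.1))
  have hGu : G u = u := huP.1
  have hGv : G v = v := hvP.1
  have huv : u < v := lt_trans huz hzv
  have hnofix : ∀ x ∈ Ioo u v, G x ≠ x := by
    intro x hx hfixx
    rcases le_or_gt x z with h | h
    · have : x ≤ u := le_csSup ⟨z, fun y hy => hy.2⟩ ⟨hfixx, h⟩
      linarith [hx.1]
    · have : v ≤ x := csInf_le ⟨z, fun y hy => hy.2⟩ ⟨hfixx, le_of_lt h⟩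
      linarith [hx.2]
  have hvu1 : v ≤ u + 1 := by
    have hu1P : u + 1 ∈ P := by
      simp only [hP, mem_setOf_eq]
      rw [show u + (1:ℝ) = u + ((1:ℤ):ℝ) by norm_num, addint h1 1 u, hGu]
    rcases le_or_gt z (u + 1) with h | h
    · exact csInf_le ⟨z, fun y hy => hy.2⟩ ⟨hu1P, h⟩
    · exfalso
      have : u + 1 ≤ u := le_csSup ⟨z, fun y hy => hy.2⟩ ⟨hu1P, le_of_lt h⟩
      linarith
  have hpos : ∀ x ∈ Ioo u v, x < G x := by
    intro x hx
    rcases lt_or_ge x (G x) with h | h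
    · exact h
    have hlt : G x < x := lt_of_le_of_ne h (hnofix x hx)
    exfalso
    have hcont : Continuous (fun y => G y - y) := hc.sub continuous_id
    have hzIoo : z ∈ Ioo u v := ⟨huz, hzv⟩
    rcases le_total x z with hxz | hxz
    · obtain ⟨y, hy, hyv⟩ := intermediate_value_Icc hxz hcont.continuousOn
        (⟨by linarith, by linarith⟩ : (0:ℝ) ∈ Icc (G x - x) (G z - z))
      have : y ∈ Ioo u v := ⟨lt_of_lt_of_le hx.1 hy.1, lt_of_le_of_lt hy.2 hzv⟩
      exact hnofix y this (by simp only at hyv; linarith)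
    · obtain ⟨y, hy, hyv⟩ := intermediate_value_Icc' hxz hcont.continuousOn
        (⟨by linarith, by linarith⟩ : (0:ℝ) ∈ Icc (G x - x) (G z - z))
      have : y ∈ Ioo u v := ⟨lt_of_lt_of_le huz hy.1, lt_of_le_of_lt hy.2 hx.2⟩
      exact hnofix y this (by simp only at hyv; linarith)
  have hmaps : ∀ x ∈ Ioo u v, G x ∈ Ioo u v := by
    intro x hx
    constructor
    · rw [← hGu]; exact hm hx.1
    · rw [← hGv]; exact hm hx.2
  -- the order isomorphism and integer iterates
  have hsurj : Function.Surjective G := lift_surj hc h1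
  set e := StrictMono.orderIsoOfSurjective G hm hsurj with he
  have heapp : ∀ x, e x = G x := fun x => rfl
  have hesymm : ∀ x, G (e.symm x) = x := fun x =>
    StrictMono.orderIsoOfSurjective_self_symm_apply G hm hsurj x
  have hinv : ∀ x ∈ Ioo u v, e.symm x ∈ Ioo u v := by
    intro x hx
    constructor
    · have : G u < G (e.symm x) := by rw [hGu, hesymm]; exact hx.1
      exact hm.lt_iff_lt.mp this
    · have : G (e.symm x) < G v := by rw [hGv, hesymm]; exact hx.2
      exact hm.lt_iff_lt.mp this
  set ep := e.toEquiv with hep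
  have hepapp : ∀ x, ep x = G x := fun x => rfl
  -- the break set T of G inside (u,v)
  set T := (hfin u v).toFinset with hT
  have hTmem : ∀ x, x ∈ T ↔ x ∈ Ioo u v ∧ DLL G x ≠ DRR G x := by
    intro x
    rw [hT, Set.Finite.mem_toFinset, mem_setOf_eq]
  have hTsub : (↑T : Set ℝ) ⊆ Ioo u v := fun x hx => ((hTmem x).mp hx).1
  set σ : ℝ → ℝ := fun x => DLL G x / DRR G x with hσ
  -- telescoping product
  have hprodT : ∏ x ∈ T, σ x = DRR G u / DLL G v :=
    gap_prod hosa T.card T u v rfl huv hTsub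
      (fun x hx hxT => by
        by_contra hne
        exact hxT ((hTmem x).mpr ⟨hx, hne⟩))
  have hDRRu : 1 < DRR G u := by
    obtain ⟨δ, hδ, c, c', _, _, _, hr⟩ := hosa.pieces u
    set y := u + min δ ((v - u)/2) with hy
    have hmin : 0 < min δ ((v - u)/2) := lt_min hδ (by linarith)
    have hyIcc : y ∈ Icc u (u + δ) := ⟨by rw [hy]; linarith, by
      rw [hy]; linarith [min_le_left δ ((v-u)/2)]⟩
    have hyIoo : y ∈ Ioo u v := ⟨by rw [hy]; linarith, by
      rw [hy]; linarith [min_le_right δ ((v-u)/2)]⟩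
    have h1' := hr y hyIcc
    have h2' := hr u ⟨le_refl u, by linarith⟩
    rw [hGu] at h2'
    have h3' := hpos y hyIoo
    rw [h1'] at h3'
    have h4 : y - u > 0 := by rw [hy]; linarith
    nlinarith
  have hDLLv : DLL G v < 1 ∧ 0 < DLL G v := by
    obtain ⟨δ, hδ, c, c', hDpos, _, hl, _⟩ := hosa.pieces v
    refine ⟨?_, hDpos⟩
    set y := v - min δ ((v - u)/2) with hy
    have hmin : 0 < min δ ((v - u)/2) := lt_min hδ (by linarith)
    have hyIcc : y ∈ Icc (v - δ) v := ⟨by rw [hy]; linarith [min_le_left δ ((v-u)/2)], by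
      rw [hy]; linarith⟩
    have hyIoo : y ∈ Ioo u v := ⟨by rw [hy]; linarith [min_le_right δ ((v-u)/2)], by
      rw [hy]; linarith⟩
    have h1' := hl y hyIcc
    have h2' := hl v ⟨by linarith, le_refl v⟩
    rw [hGv] at h2'
    have h3' := hpos y hyIoo
    rw [h1'] at h3'
    have h4 : v - y > 0 := by rw [hy]; linarith
    nlinarith
  have hprodne : ∏ x ∈ T, σ x ≠ 1 := by
    rw [hprodT]
    intro h
    have := hDLLv.2
    have h5 : DRR G u = DLL G v := by
      field_simp at h
      linarith [h]
    linarith [hDLLv.1, hDRRu]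
  -- orbit relation
  set R : ℝ → ℝ → Prop := fun x y => ∃ m : ℤ, (ep ^ m) x = y with hR
  have hrefl : ∀ x, R x x := fun x => ⟨0, by simp⟩
  have hsym : ∀ {x y}, R x y → R y x := by
    rintro x y ⟨m, rfl⟩
    exact ⟨-m, by simp [← Equiv.Perm.mul_apply, ← zpow_add]⟩
  have htrans : ∀ {x y z}, R x y → R y z → R x z := by
    rintro x y z ⟨m, rfl⟩ ⟨m', rfl⟩
    exact ⟨m' + m, by simp [← Equiv.Perm.mul_apply, ← zpow_add]⟩
  -- find an orbit class with non-trivial product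
  have hexd : ∃ d ∈ T, ∏ x ∈ T.filter (R d), σ x ≠ 1 := by
    by_contra hcon
    push_neg at hcon
    exact hprodne (class_prod_one R hrefl (fun {x y} => hsym) (fun {x y z} => htrans) σ T hcon
      T.card T rfl (Finset.Subset.refl T) (fun d _ x hx _ => hx))
  obtain ⟨d, hdT, hcd⟩ := hexd
  -- the bi-infinite orbit of d
  set w : ℤ → ℝ := fun m => (ep ^ m) d with hw
  have hw0 : w 0 = d := by simp [hw]
  have hwsucc : ∀ m : ℤ, w (m + 1) = G (w m) := by
    intro m
    have : ep ^ (m + 1) = ep * ep ^ m := by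
      rw [add_comm, zpow_add, zpow_one]
    rw [hw]
    simp only [this, Equiv.Perm.mul_apply]
    exact hepapp _
  have hwIoo : ∀ m : ℤ, w m ∈ Ioo u v := by
    intro m
    induction m using Int.induction_on with
    | zero => rw [hw0]; exact hTsub hdT
    | succ k ih => rw [hwsucc k]; exact hmaps _ ih
    | pred k ih =>
        have h2 : w (-(k:ℤ) - 1 + 1) = G (w (-(k:ℤ) - 1)) := hwsucc _
        rw [show -(k:ℤ) - 1 + 1 = -(k:ℤ) by ring] at h2
        have h3 : e.symm (w (-(k:ℤ))) = w (-(k:ℤ) - 1) := by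
          rw [h2]
          exact StrictMono.orderIsoOfSurjective_symm_apply_self G hm hsurj _
        rw [← h3]
        exact hinv _ ih
  have hwmono : StrictMono w := strictMono_int_of_lt_succ (fun m => by
    rw [hwsucc m]; exact hpos _ (hwIoo m))
  have hwinj : Function.Injective w := hwmono.injective
  -- finitely many orbit points hit T
  have hHits : Set.Finite {m : ℤ | w m ∈ T} := by
    have : {m : ℤ | w m ∈ T} = w ⁻¹' (↑T : Set ℝ) := rfl
    rw [this]
    exact Set.Finite.preimage hwinj.injOn T.finite_toSet
  set Hf := hHits.toFinset with hHf
  set M₀ := Hf.sup (fun m => m.natAbs) with hM₀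
  have hbound : ∀ m ∈ Hf, m.natAbs ≤ M₀ := fun m hm' => Finset.le_sup hm'
  -- the class product equals the product over the orbit hits
  have hKeq : T.filter (R d) = Hf.image w := by
    ext x
    simp only [Finset.mem_filter, Finset.mem_image, hHf, Set.Finite.mem_toFinset, mem_setOf_eq]
    constructor
    · rintro ⟨hxT, m, rfl⟩
      exact ⟨m, hxT, rfl⟩
    · rintro ⟨m, hmT, rfl⟩
      exact ⟨hmT, m, rfl⟩
  have hcd' : ∏ m ∈ Hf, σ (w m) ≠ 1 := by
    rw [hKeq] at hcd
    rwa [Finset.prod_image (fun a _ b _ hab => hwinj hab)] at hcd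
  -- iterates along the orbit
  have hiter : ∀ (j : ℤ) (i : ℕ), G^[i] (w j) = w (j + i) := by
    intro j i
    induction i with
    | zero => simp
    | succ i ih =>
        rw [Function.iterate_succ_apply', ih, ← hwsucc]
        push_cast
        ring_nf
  -- the jump of G^[n] at w (-j)
  have hwindow : ∀ (j n : ℕ), M₀ ≤ j → (j:ℤ) + M₀ + 1 ≤ n →
      DLL (G^[n]) (w (-(j:ℤ))) / DRR (G^[n]) (w (-(j:ℤ))) = ∏ m ∈ Hf, σ (w m) := by
    intro j n hj hn
    rw [DLL_iterate hosa n, DRR_iterate hosa n, ← Finset.prod_div_distrib]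
    have hterm : ∀ i ∈ Finset.range n,
        DLL G (G^[i] (w (-(j:ℤ)))) / DRR G (G^[i] (w (-(j:ℤ)))) = σ (w (-(j:ℤ) + i)) := by
      intro i _
      rw [hiter]
    rw [Finset.prod_congr rfl hterm]
    -- reindex over an integer window
    have hre : ∏ i ∈ Finset.range n, σ (w (-(j:ℤ) + i)) =
        ∏ m ∈ Finset.Icc (-(j:ℤ)) (-(j:ℤ) + n - 1), σ (w m) := by
      refine Finset.prod_nbij' (fun i : ℕ => -(j:ℤ) + i) (fun m : ℤ => (m + (j:ℤ)).toNat)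
        ?_ ?_ ?_ ?_ ?_
      · intro i hi
        simp only [Finset.mem_range] at hi
        simp only [Finset.mem_Icc]
        omega
      · intro m hm'
        simp only [Finset.mem_Icc] at hm'
        simp only [Finset.mem_range]
        omega
      · intro i hi
        simp only [Finset.mem_range] at hi
        show ((-(j:ℤ) + ↑i) + ↑j).toNat = i
        omega
      · intro m hm'
        simp only [Finset.mem_Icc] at hm'
        show -(j:ℤ) + ↑((m + ↑j).toNat) = m
        omega
      · intro i _
        rfl
    rw [hre]
    -- restrict to the hits
    symm
    apply Finset.prod_subset
    · intro m hm'
      have := hbound m hm'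
      simp only [Finset.mem_Icc]
      omega
    · intro m hmIcc hmHf
      have hwm : w m ∉ T := by
        intro hwT
        exact hmHf (by rw [hHf, Set.Finite.mem_toFinset]; exact hwT)
      have : DLL G (w m) = DRR G (w m) := by
        by_contra hne
        exact hwm ((hTmem _).mpr ⟨hwIoo m, hne⟩)
      rw [hσ]
      simp only
      rw [this, div_self (ne_of_gt (hosa.DRR_pos (w m)))]
  -- produce M distinct break points of G^[n] in [0,1)
  set n := 2 * M₀ + M + 1 with hn
  refine ⟨n, by omega, (Finset.range M).image
    (fun l : ℕ => Int.fract (w (-(M₀ + l : ℤ)))), ?_, ?_, ?_⟩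
  · -- cardinality
    rw [Finset.card_image_of_injOn, Finset.card_range]
    intro l hl l' hl' hfr
    have h1' : Int.fract (w (-(M₀ + l : ℤ))) = Int.fract (w (-(M₀ + l' : ℤ))) := hfr
    rw [Int.fract_eq_fract] at h1'
    obtain ⟨k, hk⟩ := h1'
    have hw1 := hwIoo (-(M₀ + l : ℤ))
    have hw2 := hwIoo (-(M₀ + l' : ℤ))
    have hklt : |(k:ℝ)| < 1 := by
      rw [abs_lt]
      constructor <;> [nlinarith [hw1.1, hw1.2, hw2.1, hw2.2, hvu1]; nlinarith [hw1.1, hw1.2, hw2.1, hw2.2, hvu1]]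
    have hk0 : k = 0 := by
      have h9 : |k| < 1 := by exact_mod_cast hklt
      have := abs_lt.mp h9
      omega
    rw [hk0] at hk
    push_cast at hk
    have : w (-(M₀ + l : ℤ)) = w (-(M₀ + l' : ℤ)) := by linarith
    have := hwinj this
    omega
  · -- membership in [0,1)
    intro y hy
    simp only [Finset.coe_image, mem_image] at hy
    obtain ⟨l, _, rfl⟩ := hy
    exact ⟨Int.fract_nonneg _, Int.fract_lt_one _⟩
  · -- break points
    intro y hy
    simp only [Finset.mem_image] at hy
    obtain ⟨l, hl, rfl⟩ := hy
    rw [Finset.mem_range] at hl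
    set j : ℕ := M₀ + l with hj
    have hjz : -(M₀ + l : ℤ) = -((j:ℕ):ℤ) := by push_cast; omega
    have hjump := hwindow j n (by omega) (by push_cast; omega)
    have hiterosa := hosa.iterate n
    have hiter1 : ∀ x, G^[n] (x + 1) = G^[n] x + 1 := iterate_add_one h1 n
    have hfract : Int.fract (w (-(j:ℤ))) = w (-(j:ℤ)) + ((-⌊w (-(j:ℤ))⌋ : ℤ) : ℝ) := by
      push_cast
      rw [← Int.self_sub_floor]
      ring
    apply hiterosa.break_of_ne
    rw [hjz, hfract, DLL_shift hiter1 hiterosa, DRR_shift hiter1 hiterosa]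
    intro heq
    apply hcd'
    rw [← hjump]
    rw [heq, div_self (ne_of_gt (hiterosa.DRR_pos (w (-(j:ℤ)))))]

/-- if the number of break points of the iterates `f^k` of a PWL circle
homeomorphism with rotation number `p/q` is uniformly bounded, then every break point
is periodic (of period `q`) and `f` is conjugate to the rigid rotation by `p/q`. -/
theorem stmt8 (F : ℝ → ℝ) (B : Finset ℝ) (p : ℤ) (q : ℕ) (hq : 0 < q)
    (hF : IsPWLLift F B) (hrot : HasRotNum F ((p : ℝ) / q))
    (hbdd : ∃ N : ℕ, ∀ k : ℕ, 1 ≤ k → ∀ C : Finset ℝ,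
      (↑C : Set ℝ) ⊆ Set.Ico (0 : ℝ) 1 →
      (∀ c ∈ C, IsBreakPoint (F^[k]) c) → C.card ≤ N) :
    (∀ b ∈ B, F^[q] b = b + p) ∧
    ∃ H : ℝ → ℝ, IsLift H ∧ ∀ x, H (F x) = H x + (p : ℝ) / q := by
  obtain ⟨⟨hcont, hmono, h1⟩, hBsub, hBbrk, haff⟩ := hF
  obtain ⟨N, hN⟩ := hbdd
  set G : ℝ → ℝ := fun x => F^[q] x - (p:ℝ) with hG
  have hq1 : ∀ x, F^[q] (x + 1) = F^[q] x + 1 := iterate_add_one h1 q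
  have hGcont : Continuous G := ((hcont.iterate q).sub continuous_const)
  have hGmono : StrictMono G := fun a b hab => by
    simp only [hG]
    have := (hmono.iterate q) hab
    linarith
  have hGadd : ∀ x, G (x + 1) = G x + 1 := by
    intro x
    simp only [hG, hq1 x]
    ring
  have hGosa : OSA G := by
    have h2 := (pwl_OSA hcont hmono haff).iterate q
    intro x
    obtain ⟨δ, hδ, a, c, a', c', ha, ha', hl, hr⟩ := h2 x
    exact ⟨δ, hδ, a, c - p, a', c' - p, ha, ha', fun y hy => by
      simp only [hG]; rw [hl y hy]; ring, fun y hy => by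
      simp only [hG]; rw [hr y hy]; ring⟩
  have hGfin : ∀ u v : ℝ, Set.Finite {x : ℝ | x ∈ Ioo u v ∧ DLL G x ≠ DRR G x} :=
    fun u v => G_fin hmono haff u v
  have hGn : ∀ (n : ℕ) (x : ℝ), G^[n] x = F^[n*q] x - (n:ℝ) * p := by
    intro n
    induction n with
    | zero => intro x; simp
    | succ n ih =>
        intro x
        rw [Function.iterate_succ_apply', ih]
        simp only [hG]
        have h3 : F^[q] (F^[n*q] x - (n:ℝ)*p) = F^[q] (F^[n*q] x) - (n:ℝ)*p := by
          have := addint hq1 (-(n*p) : ℤ) (F^[n*q] x)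
          push_cast at this
          rw [show F^[n*q] x + (-((n:ℝ)*p)) = F^[n*q] x - (n:ℝ)*p by ring] at this
          rw [this]; ring
        rw [h3, show (n+1)*q = q + n*q by ring, Function.iterate_add_apply]
        push_cast
        ring
  have hGrot : Tendsto (fun m : ℕ => (G^[m] 0 - 0) / m) atTop (nhds 0) := by
    have hmul : Tendsto (fun m : ℕ => m * q) atTop atTop :=
      tendsto_atTop_mono (fun m => Nat.le_mul_of_pos_right m hq) tendsto_id
    have h2 : Tendsto (fun m : ℕ => (F^[m*q] 0 - 0) / (m*q : ℕ)) atTop (nhds ((p:ℝ)/q)) :=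
      (hrot 0).comp hmul
    have h3 : Tendsto (fun m : ℕ => (q:ℝ) * ((F^[m*q] 0 - 0) / (m*q : ℕ)) - p) atTop
        (nhds ((q:ℝ) * ((p:ℝ)/q) - p)) := (h2.const_mul _).sub_const _
    have h4 : (q:ℝ) * ((p:ℝ)/q) - p = 0 := by
      have hq0 : (q:ℝ) ≠ 0 := by exact_mod_cast hq.ne'
      field_simp
      ring
    rw [h4] at h3
    apply h3.congr'
    filter_upwards [eventually_ge_atTop 1] with m hm
    have hm' : (0:ℝ) < m := by exact_mod_cast Nat.pos_of_ne_zero (by omega)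
    have hq' : (0:ℝ) < q := by exact_mod_cast hq
    rw [hGn m 0]
    push_cast
    field_simp
    ring
  have hGfix : ∃ x, G x = x := exists_fixed hGcont hGadd hGrot
  -- contradiction machinery
  have hfinish : ∀ (n : ℕ) (C : Finset ℝ), 1 ≤ n → N + 1 ≤ C.card →
      (↑C : Set ℝ) ⊆ Ico (0:ℝ) 1 → (∀ y ∈ C, IsBreakPoint (G^[n]) y) → False := by
    intro n C hn hcard hsub hbrk
    have hfun : F^[n*q] = fun y => G^[n] y + (n:ℝ)*p := by
      funext y
      rw [hGn n y]
      ring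
    have := hN (n*q) (Nat.one_le_iff_ne_zero.mpr (Nat.mul_ne_zero (by omega) (by omega))) C hsub (fun c hc => by
      rw [hfun]
      exact break_add_const (hbrk c hc))
    omega
  have key : ∀ x, G x = x := by
    by_contra hcon
    push_neg at hcon
    obtain ⟨z, hz⟩ := hcon
    rcases lt_or_gt_of_ne hz with hlt | hgt
    · -- G z < z : reflect
      set Gh : ℝ → ℝ := fun x => -(G (-x)) with hGh
      have hGhcont : Continuous Gh := (hGcont.comp continuous_neg).neg
      have hGhmono : StrictMono Gh := fun a b hab => by
        simp only [hGh, neg_lt_neg_iff]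
        exact hGmono (by linarith)
      have hGhadd : ∀ x, Gh (x + 1) = Gh x + 1 := by
        intro x
        simp only [hGh]
        have h2 := hGadd (-x - 1)
        rw [show -x - 1 + 1 = -x by ring] at h2
        rw [show -(x+1) = -x - 1 by ring]
        have : G (-x - 1) = G (-x) - 1 := by linarith
        rw [this]; ring
      have hGhosa : OSA Gh := refl_OSA hGosa
      have hGhfin : ∀ u v : ℝ, Set.Finite {x : ℝ | x ∈ Ioo u v ∧ DLL Gh x ≠ DRR Gh x} := by
        intro u v
        have hsub2 : {x : ℝ | x ∈ Ioo u v ∧ DLL Gh x ≠ DRR Gh x} ⊆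
            (fun x : ℝ => -x) ⁻¹' {y : ℝ | y ∈ Ioo (-v) (-u) ∧ DLL G y ≠ DRR G y} := by
          intro x hx
          obtain ⟨hx1, hx2⟩ := hx
          simp only [mem_preimage, mem_setOf_eq]
          constructor
          · exact ⟨by simp only [mem_Ioo] at hx1 ⊢; linarith [hx1.2],
              by simp only [mem_Ioo] at hx1 ⊢; linarith [hx1.1]⟩
          · rw [refl_DLL hGosa, refl_DRR hGosa] at hx2
            exact fun h => hx2 (h.symm)
        exact Set.Finite.subset (Set.Finite.preimage (neg_injective.injOn) (hGfin (-v) (-u)))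
          hsub2
      have hGhfix : ∃ x, Gh x = x := by
        obtain ⟨x₀, hx₀⟩ := hGfix
        exact ⟨-x₀, by simp only [hGh, neg_neg, hx₀]⟩
      have hzh : -z < Gh (-z) := by
        simp only [hGh, neg_neg]
        linarith
      obtain ⟨n, hn, C, hcard, hsub, hbrk⟩ := main_breaks hGhcont hGhmono hGhadd hGhosa
        hGhfin hGhfix hzh (N+1)
      -- transfer the break points
      apply hfinish n (C.image (fun y => Int.fract (-y))) hn
      · rw [Finset.card_image_of_injOn]
        · exact hcard
        · intro y hy y' hy' hf
          have h2 : Int.fract (-y) = Int.fract (-y') := hf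
          rw [Int.fract_eq_fract] at h2
          obtain ⟨k, hk⟩ := h2
          have hyI := hsub hy
          have hy'I := hsub hy'
          simp only [mem_Ico] at hyI hy'I
          have : |(k:ℝ)| < 1 := by
            rw [abs_lt]
            constructor <;> [linarith [hyI.1, hyI.2, hy'I.1, hy'I.2]; linarith [hyI.1, hyI.2, hy'I.1, hy'I.2]]
          have hk0 : k = 0 := by
            have h9 : |k| < 1 := by exact_mod_cast this
            have := abs_lt.mp h9
            omega
          rw [hk0] at hk
          push_cast at hk
          linarith
      · intro y hy
        simp only [Finset.coe_image, mem_image] at hy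
        obtain ⟨w, _, rfl⟩ := hy
        exact ⟨Int.fract_nonneg _, Int.fract_lt_one _⟩
      · intro y hy
        simp only [Finset.mem_image] at hy
        obtain ⟨w, hw, rfl⟩ := hy
        have hbw := hbrk w hw
        have hGh_iter : Gh^[n] = fun x => -(G^[n] (-x)) := funext (refl_iter G n)
        rw [hGh_iter] at hbw
        have hbneg : IsBreakPoint (G^[n]) (-w) := break_neg hbw
        have hiter1 : ∀ x, G^[n] (x + 1) = G^[n] x + 1 := iterate_add_one hGadd n
        have := break_translate hiter1 (-⌊(-w : ℝ)⌋) hbneg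
        have hfr : Int.fract (-w) = -w + ((-⌊(-w:ℝ)⌋ : ℤ) : ℝ) := by
          push_cast
          rw [← Int.self_sub_floor]
          ring
        rw [hfr]
        exact this
    · -- z < G z : direct
      obtain ⟨n, hn, C, hcard, hsub, hbrk⟩ := main_breaks hGcont hGmono hGadd hGosa
        hGfin hGfix hgt (N+1)
      exact hfinish n C hn hcard hsub hbrk
  have hFq : ∀ x, F^[q] x = x + p := by
    intro x
    have := key x
    simp only [hG] at this
    linarith
  refine ⟨fun b _ => hFq b, ?_⟩
  -- the conjugacy
  refine ⟨fun x => (∑ i ∈ Finset.range q, F^[i] x) / q, ⟨?_, ?_, ?_⟩, ?_⟩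
  · exact (continuous_finset_sum _ (fun i _ => hcont.iterate i)).div_const _
  · intro a b hab
    have hsum : (∑ i ∈ Finset.range q, F^[i] a) < ∑ i ∈ Finset.range q, F^[i] b := by
      apply Finset.sum_lt_sum
      · exact fun i _ => le_of_lt ((hmono.iterate i) hab)
      · exact ⟨0, Finset.mem_range.mpr hq, by simpa using hab⟩
    have hq' : (0:ℝ) < q := by exact_mod_cast hq
    exact (div_lt_div_iff_of_pos_right hq').mpr hsum
  · intro x
    have h2 : ∀ i ∈ Finset.range q, F^[i] (x + 1) = F^[i] x + 1 :=
      fun i _ => iterate_add_one h1 i x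
    show (∑ i ∈ Finset.range q, F^[i] (x+1)) / q = (∑ i ∈ Finset.range q, F^[i] x) / q + 1
    rw [Finset.sum_congr rfl h2, Finset.sum_add_distrib, Finset.sum_const,
      Finset.card_range, nsmul_eq_mul, mul_one]
    have hq' : (0:ℝ) < q := by exact_mod_cast hq
    field_simp
  · intro x
    have h2 : ∀ i ∈ Finset.range q, F^[i] (F x) = F^[i+1] x := by
      intro i _
      rw [Function.iterate_succ_apply]
    show (∑ i ∈ Finset.range q, F^[i] (F x)) / q = (∑ i ∈ Finset.range q, F^[i] x) / q + (p:ℝ)/q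
    rw [Finset.sum_congr rfl h2]
    have h3 : ∑ i ∈ Finset.range q, F^[i+1] x =
        (∑ i ∈ Finset.range q, F^[i] x) + F^[q] x - F^[0] x := by
      have h4 := Finset.sum_range_succ (fun i => F^[i] x) q
      have h5 := Finset.sum_range_succ' (fun i => F^[i] x) q
      rw [h4] at h5
      linarith [h5]
    rw [h3]
    have hq' : (0:ℝ) < q := by exact_mod_cast hq
    rw [hFq x]
    simp only [Function.iterate_zero, id_eq]
    field_simp
    ring
end
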